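/- arXiv:2011.11129 — 5 statements merged into one kernel-verified Lean document; each statement's English description precedes it below -/
import Mathlib

section
/- Let M be a lazy reversible ergodic Markov chain on a finite state space Ω with stationary distribution π, and let f : Ω → ℝ. For every pair of positive integers T ≤ T′, the trace variances satisfy T·v_T ≤ T′·v_{T′}; in particular v_π ≤ 2·v₂ ≤ 3·v₃ ≤ ⋯, where v_π = Var_π[f]. -/
open Finset
open scoped BigOperators Classical

section MarkovDefs

variable {Ω : Type*} [Fintype Ω] [DecidableEq Ω]

/-- `M` is a (row-)stochastic matrix: the transition matrix of a Markov chain. -/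
def IsStochastic (M : Matrix Ω Ω ℝ) : Prop :=
  (∀ x y, 0 ≤ M x y) ∧ ∀ x, ∑ y, M x y = 1

/-- `p` is a probability distribution on `Ω`. -/
def IsProbDist (p : Ω → ℝ) : Prop :=
  (∀ x, 0 ≤ p x) ∧ ∑ x, p x = 1

/-- `p` is a stationary distribution of the chain `M`. -/
def IsStationaryDist (M : Matrix Ω Ω ℝ) (p : Ω → ℝ) : Prop :=
  IsProbDist p ∧ ∀ y, ∑ x, p x * M x y = p y

/-- Ergodicity (irreducibility and aperiodicity, i.e. primitivity):
some power of `M` is entrywise positive. -/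
def IsErgodic (M : Matrix Ω Ω ℝ) : Prop :=
  ∃ k : ℕ, ∀ x y, 0 < (M ^ k) x y

/-- The chain is lazy: each self-loop probability is at least `1/2`. -/
def IsLazy (M : Matrix Ω Ω ℝ) : Prop :=
  ∀ x, (1 : ℝ) / 2 ≤ M x x

/-- Reversibility (detailed balance) of `M` with respect to `p`. -/
def IsReversible (M : Matrix Ω Ω ℝ) (p : Ω → ℝ) : Prop :=
  ∀ x y, p x * M x y = p y * M y x

/-- Mean of `f` under the distribution `p`. -/
noncomputable def stMean (p : Ω → ℝ) (f : Ω → ℝ) : ℝ := ∑ x, p x * f x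

/-- Variance of `f` under the distribution `p`. -/
noncomputable def stVar (p : Ω → ℝ) (f : Ω → ℝ) : ℝ :=
  ∑ x, p x * (f x - stMean p f) ^ 2

/-- Probability that a stationary trace of length `T` of the chain `M`
(started in `p`) equals `x`. -/
noncomputable def traceProb (M : Matrix Ω Ω ℝ) (p : Ω → ℝ) (T : ℕ) (x : Fin T → Ω) : ℝ :=
  (if h : 0 < T then p (x ⟨0, h⟩) else 1) *
    ∏ i : Fin T, if h : (i : ℕ) + 1 < T then M (x i) (x ⟨(i : ℕ) + 1, h⟩) else 1

/-- Expectation of a functional `F` of a stationary length-`T` trace of `M`. -/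
noncomputable def traceExp (M : Matrix Ω Ω ℝ) (p : Ω → ℝ) (T : ℕ)
    (F : (Fin T → Ω) → ℝ) : ℝ :=
  ∑ x : Fin T → Ω, traceProb M p T x * F x

/-- The trace variance `v_T`: the variance of the trace average
`(1/T) ∑ᵢ f(Xᵢ)` along a stationary length-`T` trace of `M`. -/
noncomputable def traceVar (M : Matrix Ω Ω ℝ) (p : Ω → ℝ) (f : Ω → ℝ) (T : ℕ) : ℝ :=
  traceExp M p T fun x => ((∑ i, f (x i)) / (T : ℝ) - stMean p f) ^ 2

/-- Stationary autocovariance of `f` at lag `i`: `Cov(f(X₁), f(X_{1+i}))`. -/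
noncomputable def autocov (M : Matrix Ω Ω ℝ) (p : Ω → ℝ) (f : Ω → ℝ) (i : ℕ) : ℝ :=
  ∑ x, ∑ y, p x * (M ^ i) x y * (f x - stMean p f) * (f y - stMean p f)

/-- `μ` is a (real) eigenvalue of the matrix `M`. -/
def IsEigenvalue (M : Matrix Ω Ω ℝ) (μ : ℝ) : Prop :=
  ∃ v : Ω → ℝ, v ≠ 0 ∧ M.mulVec v = μ • v

/-- The second largest absolute eigenvalue of `M` :
the largest absolute value of an eigenvalue other than `1`. -/
noncomputable def secondEigenvalue (M : Matrix Ω Ω ℝ) : ℝ :=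
  sSup {s : ℝ | ∃ μ : ℝ, IsEigenvalue M μ ∧ μ ≠ 1 ∧ s = |μ|}

/-- Relaxation time `τ_rel = 1 / (1 - λ)`. -/
noncomputable def relaxTime (M : Matrix Ω Ω ℝ) : ℝ := 1 / (1 - secondEigenvalue M)

/-- Total variation distance between two distributions on `Ω`. -/
noncomputable def tvDist (p q : Ω → ℝ) : ℝ := (∑ x, |p x - q x|) / 2

/-- Mixing time: least `t` such that from every initial distribution the chain is
within total variation `1/4` of `p` after `t` steps. -/
noncomputable def mixingTime (M : Matrix Ω Ω ℝ) (p : Ω → ℝ) : ℕ :=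
  sInf {t : ℕ | ∀ ν : Ω → ℝ, IsProbDist ν →
    tvDist (fun y => ∑ x, ν x * (M ^ t) x y) p ≤ 1 / 4}

/-- The `T`-trace chain `M^{(T)}` for `T = n + 1`, on state space `Fin (n+1) → Ω`. -/
noncomputable def traceChain (M : Matrix Ω Ω ℝ) (n : ℕ) :
    Matrix (Fin (n + 1) → Ω) (Fin (n + 1) → Ω) ℝ :=
  fun a b => M (a (Fin.last n)) (b 0) * ∏ i : Fin n, M (b i.castSucc) (b i.succ)

end MarkovDefs


section TVAux
set_option linter.unusedSectionVars false
set_option maxHeartbeats 1000000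
variable {Ω : Type*} [Fintype Ω] [DecidableEq Ω]

noncomputable def ipd (pd u v : Ω → ℝ) : ℝ := ∑ x, pd x * (u x * v x)

noncomputable def acv (M : Matrix Ω Ω ℝ) (pd g : Ω → ℝ) (k : ℕ) : ℝ :=
  ∑ a, ∑ b, pd a * (M ^ k) a b * (g a * g b)

noncomputable def pathP (M : Matrix Ω Ω ℝ) (pd : Ω → ℝ) (n : ℕ) (x : Fin (n+1) → Ω) : ℝ :=
  pd (x 0) * ∏ i : Fin n, M (x i.castSucc) (x i.succ)

lemma ipd_self_nonneg {pd : Ω → ℝ} (h : ∀ x, 0 ≤ pd x) (u : Ω → ℝ) :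
    0 ≤ ipd pd u u := by
  refine Finset.sum_nonneg fun x _ => ?_
  have := h x
  nlinarith [sq_nonneg (u x)]

lemma ipd_mulVec {M : Matrix Ω Ω ℝ} {pd : Ω → ℝ} (hrev : IsReversible M pd)
    (u v : Ω → ℝ) : ipd pd u (M.mulVec v) = ipd pd (M.mulVec u) v := by
  unfold ipd Matrix.mulVec dotProduct
  have l : ∀ x, pd x * (u x * ∑ y, M x y * v y) = ∑ y, pd x * M x y * u x * v y := by
    intro x; rw [Finset.mul_sum, Finset.mul_sum]
    exact Finset.sum_congr rfl fun y _ => by ring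
  have r : ∀ x, pd x * ((∑ y, M x y * u y) * v x) = ∑ y, pd x * M x y * u y * v x := by
    intro x; rw [Finset.sum_mul, Finset.mul_sum]
    exact Finset.sum_congr rfl fun y _ => by ring
  rw [Finset.sum_congr rfl fun x _ => l x, Finset.sum_congr rfl fun x _ => r x,
    Finset.sum_comm]
  refine Finset.sum_congr rfl fun x _ => Finset.sum_congr rfl fun y _ => ?_
  linear_combination (u y * v x) * (hrev y x)

lemma ipd_pow_mulVec {M : Matrix Ω Ω ℝ} {pd : Ω → ℝ} (hrev : IsReversible M pd)
    (k : ℕ) (u v : Ω → ℝ) :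
    ipd pd u ((M ^ k).mulVec v) = ipd pd ((M ^ k).mulVec u) v := by
  induction k generalizing u v with
  | zero => simp [Matrix.one_mulVec]
  | succ k ih =>
      rw [pow_succ, ← Matrix.mulVec_mulVec, ih, ipd_mulVec hrev,
        Matrix.mulVec_mulVec, pow_mul_comm']

lemma quad_nonneg {M : Matrix Ω Ω ℝ} {pd : Ω → ℝ}
    (hM : IsStochastic M) (hpd0 : ∀ x, 0 ≤ pd x) (hlazy : IsLazy M)
    (hrev : IsReversible M pd) (u : Ω → ℝ) :
    0 ≤ ipd pd u (M.mulVec u) := by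
  classical
  set N : Matrix Ω Ω ℝ := fun x y => M x y - if x = y then 1/2 else 0 with hN
  have hN0 : ∀ x y, 0 ≤ N x y := by
    intro x y
    simp only [hN]
    split_ifs with h
    · subst h; linarith [hlazy x]
    · linarith [hM.1 x y]
  have hNrow : ∀ x, ∑ y, N x y = 1/2 := by
    intro x
    simp only [hN]
    rw [Finset.sum_sub_distrib, hM.2 x, Finset.sum_ite_eq]
    simp
    norm_num
  have hrowsum : ∀ x, ∑ y, pd x * N x y = pd x * (1/2) := by
    intro x; rw [← Finset.mul_sum, hNrow x]
  have hNsym : ∀ x y, pd x * N x y = pd y * N y x := by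
    intro x y
    by_cases h : x = y
    · subst h; rfl
    · simp only [hN, if_neg h, if_neg (Ne.symm h)]
      have := hrev x y
      ring_nf
      linarith
  have key : ipd pd u (M.mulVec u) = (∑ x, pd x * (1/2) * u x ^ 2)
      + ∑ x, ∑ y, pd x * N x y * (u x * u y) := by
    unfold ipd Matrix.mulVec dotProduct
    rw [← Finset.sum_add_distrib]
    refine Finset.sum_congr rfl fun x _ => ?_
    have h1 : (∑ y, M x y * u y) = (1/2) * u x + ∑ y, N x y * u y := by
      have h0 : ∀ y, M x y * u y = (if x = y then (1:ℝ)/2 else 0) * u y + N x y * u y := by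
        intro y; simp only [hN]; ring
      rw [Finset.sum_congr rfl fun y _ => h0 y, Finset.sum_add_distrib]
      congr 1
      simp [ite_mul]
    have h2 : pd x * (u x * ((1/2) * u x + ∑ y, N x y * u y))
        = pd x * (1/2) * u x ^ 2 + pd x * u x * (∑ y, N x y * u y) := by ring
    rw [h1, h2, Finset.mul_sum]
    congr 1
    exact Finset.sum_congr rfl fun y _ => by ring
  have e1 : (∑ x, ∑ y, pd x * N x y * u x ^ 2) = ∑ x, pd x * (1/2) * u x ^ 2 := by
    refine Finset.sum_congr rfl fun x _ => ?_
    rw [← Finset.sum_mul, hrowsum x]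
  have e2 : (∑ x, ∑ y, pd x * N x y * u y ^ 2) = ∑ x, pd x * (1/2) * u x ^ 2 := by
    rw [Finset.sum_congr rfl fun x _ => Finset.sum_congr rfl fun y _ =>
      (by rw [hNsym x y] : pd x * N x y * u y ^ 2 = pd y * N y x * u y ^ 2)]
    rw [Finset.sum_comm]
    refine Finset.sum_congr rfl fun y _ => ?_
    rw [← Finset.sum_mul, hrowsum y]
  have hpos : 0 ≤ ∑ x, ∑ y, pd x * N x y * ((u x + u y) ^ 2 / 2) :=
    Finset.sum_nonneg fun x _ => Finset.sum_nonneg fun y _ =>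
      mul_nonneg (mul_nonneg (hpd0 x) (hN0 x y)) (by positivity)
  have hsplit : ∑ x, ∑ y, pd x * N x y * ((u x + u y) ^ 2 / 2)
      = (1/2) * (∑ x, ∑ y, pd x * N x y * u x ^ 2)
        + ((1/2) * (∑ x, ∑ y, pd x * N x y * u y ^ 2)
        + ∑ x, ∑ y, pd x * N x y * (u x * u y)) := by
    rw [Finset.mul_sum, Finset.mul_sum, ← Finset.sum_add_distrib, ← Finset.sum_add_distrib]
    refine Finset.sum_congr rfl fun x _ => ?_
    rw [Finset.mul_sum, Finset.mul_sum, ← Finset.sum_add_distrib, ← Finset.sum_add_distrib]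
    exact Finset.sum_congr rfl fun y _ => by ring
  rw [key]
  rw [e1, e2] at hsplit
  linarith


lemma acv_eq_ipd (M : Matrix Ω Ω ℝ) (pd g : Ω → ℝ) (k : ℕ) :
    acv M pd g k = ipd pd g ((M ^ k).mulVec g) := by
  unfold acv ipd Matrix.mulVec dotProduct
  refine Finset.sum_congr rfl fun a _ => ?_
  rw [Finset.mul_sum, Finset.mul_sum]
  exact Finset.sum_congr rfl fun b _ => by ring

lemma acv_nonneg {M : Matrix Ω Ω ℝ} {pd : Ω → ℝ}
    (hM : IsStochastic M) (hpd0 : ∀ x, 0 ≤ pd x)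
    (hlazy : IsLazy M)
    (hrev : IsReversible M pd) (g : Ω → ℝ) (k : ℕ) :
    0 ≤ acv M pd g k := by
  rw [acv_eq_ipd]
  rcases Nat.even_or_odd k with ⟨m, hm⟩ | ⟨m, hm⟩
  · subst hm
    rw [pow_add, ← Matrix.mulVec_mulVec, ipd_pow_mulVec hrev]
    exact ipd_self_nonneg hpd0 _
  · subst hm
    have h2 : M ^ (2 * m + 1) = M ^ m * (M ^ (m + 1)) := by
      rw [← pow_add]; ring_nf
    rw [h2, ← Matrix.mulVec_mulVec, ipd_pow_mulVec hrev,
      pow_succ', ← Matrix.mulVec_mulVec]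
    exact quad_nonneg hM hpd0 hlazy hrev _

lemma pathP_snoc (M : Matrix Ω Ω ℝ) (pd : Ω → ℝ) (n : ℕ) (y : Fin (n+1) → Ω) (b : Ω) :
    pathP M pd (n+1) (Fin.snoc y b) = pathP M pd n y * M (y (Fin.last n)) b := by
  unfold pathP
  rw [Fin.prod_univ_castSucc]
  have h0 : (Fin.snoc y b : Fin (n+2) → Ω) 0 = y 0 := by
    have : (0 : Fin (n+2)) = Fin.castSucc 0 := rfl
    rw [this, Fin.snoc_castSucc]
  have hlast : (Fin.snoc y b : Fin (n+2) → Ω) ((Fin.last n).castSucc) = y (Fin.last n) :=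
    Fin.snoc_castSucc ..
  have hlast2 : (Fin.snoc y b : Fin (n+2) → Ω) ((Fin.last n).succ) = b := by
    rw [Fin.succ_last, Fin.snoc_last]
  have hmid : ∀ j : Fin n,
      M ((Fin.snoc y b : Fin (n+2) → Ω) (j.castSucc.castSucc))
        ((Fin.snoc y b : Fin (n+2) → Ω) (j.castSucc.succ))
      = M (y j.castSucc) (y j.succ) := by
    intro j
    rw [Fin.snoc_castSucc, Fin.succ_castSucc, Fin.snoc_castSucc]
  rw [h0, hlast, hlast2, Finset.prod_congr rfl fun j _ => hmid j]
  ring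

lemma pathP_cons (M : Matrix Ω Ω ℝ) (pd : Ω → ℝ) (n : ℕ) (a : Ω) (y : Fin (n+1) → Ω) :
    pathP M pd (n+1) (Fin.cons a y) = pd a * M a (y 0) *
      ∏ i : Fin n, M (y i.castSucc) (y i.succ) := by
  unfold pathP
  rw [Fin.prod_univ_succ]
  have h0 : (Fin.cons a y : Fin (n+2) → Ω) 0 = a := Fin.cons_zero ..
  have h1 : (Fin.cons a y : Fin (n+2) → Ω) ((0 : Fin (n+1)).castSucc) = a := by
    rw [Fin.castSucc_zero]; exact Fin.cons_zero ..
  have h2 : (Fin.cons a y : Fin (n+2) → Ω) ((0 : Fin (n+1)).succ) = y 0 := Fin.cons_succ ..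
  have hmid : ∀ j : Fin n,
      M ((Fin.cons a y : Fin (n+2) → Ω) (j.succ.castSucc))
        ((Fin.cons a y : Fin (n+2) → Ω) (j.succ.succ))
      = M (y j.castSucc) (y j.succ) := by
    intro j
    rw [← Fin.succ_castSucc, Fin.cons_succ, Fin.cons_succ]
  rw [h0, h1, h2, Finset.prod_congr rfl fun j _ => hmid j]
  ring

lemma fsum_snoc (n : ℕ) (F : (Fin (n+2) → Ω) → ℝ) :
    ∑ x : Fin (n+2) → Ω, F x = ∑ y : Fin (n+1) → Ω, ∑ b : Ω, F (Fin.snoc y b) := by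
  rw [← (Fin.snocEquiv (fun _ => Ω)).sum_comp F, Fintype.sum_prod_type, Finset.sum_comm]
  rfl

lemma fsum_cons (n : ℕ) (F : (Fin (n+2) → Ω) → ℝ) :
    ∑ x : Fin (n+2) → Ω, F x = ∑ a : Ω, ∑ y : Fin (n+1) → Ω, F (Fin.cons a y) := by
  rw [← (Fin.consEquiv (fun _ => Ω)).sum_comp F, Fintype.sum_prod_type]
  rfl


/-- endpoint path-sum: joint of (X_0, X_n) is `pd a * (M^n) a b`. -/
lemma pathsum_ends (M : Matrix Ω Ω ℝ) (pd : Ω → ℝ) (n : ℕ) (φ ψ : Ω → ℝ) :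
    ∑ x : Fin (n+1) → Ω, pathP M pd n x * (φ (x 0) * ψ (x (Fin.last n)))
      = ∑ a, ∑ b, pd a * (M ^ n) a b * (φ a * ψ b) := by
  induction n generalizing ψ with
  | zero =>
      rw [← ((Equiv.funUnique (Fin 1) Ω).symm.sum_comp
        (fun x => pathP M pd 0 x * (φ (x 0) * ψ (x (Fin.last 0)))))]
      simp [pathP, Matrix.one_apply]
  | succ n ih =>
      rw [fsum_snoc]
      have step : ∀ y : Fin (n+1) → Ω, ∑ b,
          pathP M pd (n+1) (Fin.snoc y b) * (φ ((Fin.snoc y b : Fin (n+2) → Ω) 0) *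
            ψ ((Fin.snoc y b : Fin (n+2) → Ω) (Fin.last (n+1))))
          = pathP M pd n y * (φ (y 0) * (∑ b, M (y (Fin.last n)) b * ψ b)) := by
        intro y
        rw [Finset.mul_sum, Finset.mul_sum]
        refine Finset.sum_congr rfl fun b _ => ?_
        rw [pathP_snoc, Fin.snoc_last]
        have h0 : (Fin.snoc y b : Fin (n+2) → Ω) 0 = y 0 := by
          have : (0 : Fin (n+2)) = Fin.castSucc 0 := rfl
          rw [this, Fin.snoc_castSucc]
        rw [h0]; ring
      rw [Finset.sum_congr rfl fun y _ => step y,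
        ih (fun c => ∑ b, M c b * ψ b)]
      refine Finset.sum_congr rfl fun a _ => ?_
      rw [pow_succ]
      have expand : ∀ b, pd a * (M^n) a b * (φ a * ∑ c, M b c * ψ c)
          = ∑ c, pd a * ((M^n) a b * M b c) * (φ a * ψ c) := by
        intro b; simp only [Finset.mul_sum]
        exact Finset.sum_congr rfl fun c _ => by ring
      rw [Finset.sum_congr rfl fun b _ => expand b, Finset.sum_comm]
      refine Finset.sum_congr rfl fun c _ => ?_
      rw [Matrix.mul_apply, Finset.mul_sum, Finset.sum_mul]


lemma sumout_last {M : Matrix Ω Ω ℝ} {pd : Ω → ℝ} (hrow : ∀ x, ∑ y, M x y = 1)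
    (n : ℕ) (G : (Fin (n+1) → Ω) → ℝ) :
    ∑ x : Fin (n+2) → Ω, pathP M pd (n+1) x * G (fun k => x k.castSucc)
      = ∑ y : Fin (n+1) → Ω, pathP M pd n y * G y := by
  rw [fsum_snoc]
  refine Finset.sum_congr rfl fun y _ => ?_
  have hy : ∀ b : Ω, (fun k => (Fin.snoc y b : Fin (n+2) → Ω) k.castSucc) = y := by
    intro b; funext k; exact Fin.snoc_castSucc ..
  calc ∑ b, pathP M pd (n+1) (Fin.snoc y b) *
        G (fun k => (Fin.snoc y b : Fin (n+2) → Ω) k.castSucc)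
      = ∑ b, pathP M pd n y * G y * M (y (Fin.last n)) b := by
        refine Finset.sum_congr rfl fun b _ => ?_
        rw [pathP_snoc, hy b]; ring
    _ = pathP M pd n y * G y := by
        rw [← Finset.mul_sum, hrow, mul_one]

lemma sumout_first {M : Matrix Ω Ω ℝ} {pd : Ω → ℝ}
    (hst : ∀ y, ∑ x, pd x * M x y = pd y)
    (n : ℕ) (G : (Fin (n+1) → Ω) → ℝ) :
    ∑ x : Fin (n+2) → Ω, pathP M pd (n+1) x * G (fun k => x k.succ)
      = ∑ y : Fin (n+1) → Ω, pathP M pd n y * G y := by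
  rw [fsum_cons, Finset.sum_comm]
  refine Finset.sum_congr rfl fun y _ => ?_
  have hy : ∀ a : Ω, (fun k => (Fin.cons a y : Fin (n+2) → Ω) k.succ) = y := by
    intro a; funext k; exact Fin.cons_succ ..
  calc ∑ a, pathP M pd (n+1) (Fin.cons a y) *
        G (fun k => (Fin.cons a y : Fin (n+2) → Ω) k.succ)
      = ∑ a, (pd a * M a (y 0)) *
          ((∏ i : Fin n, M (y i.castSucc) (y i.succ)) * G y) := by
        refine Finset.sum_congr rfl fun a _ => ?_
        rw [pathP_cons, hy a]; ring
    _ = pathP M pd n y * G y := by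
        rw [← Finset.sum_mul, hst (y 0), pathP, mul_assoc]

lemma joint {M : Matrix Ω Ω ℝ} {pd : Ω → ℝ} (hrow : ∀ x, ∑ y, M x y = 1)
    (hst : ∀ y, ∑ x, pd x * M x y = pd y) (g : Ω → ℝ) (n : ℕ) :
    ∀ i j : ℕ, ∀ hij : i ≤ j, ∀ hj : j ≤ n,
    (∑ x : Fin (n+1) → Ω, pathP M pd n x *
      (g (x ⟨i, by omega⟩) * g (x ⟨j, by omega⟩))) = acv M pd g (j - i) := by
  induction n with
  | zero =>
      intro i j hij hj
      have hi0 : i = 0 := by omega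
      have hj0 : j = 0 := by omega
      subst hi0; subst hj0
      simpa [acv] using pathsum_ends M pd 0 g g
  | succ n ih =>
      intro i j hij hj
      by_cases hjn : j ≤ n
      · have e1 : (∑ x : Fin (n+2) → Ω, pathP M pd (n+1) x *
            (g (x ⟨i, by omega⟩) * g (x ⟨j, by omega⟩)))
            = ∑ y : Fin (n+1) → Ω, pathP M pd n y *
              (g (y ⟨i, by omega⟩) * g (y ⟨j, by omega⟩)) :=
          sumout_last hrow n
            (fun y => g (y ⟨i, by omega⟩) * g (y ⟨j, by omega⟩))
        exact e1.trans (ih i j hij hjn)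
      · have hjn1 : j = n + 1 := by omega
        subst hjn1
        by_cases hi0 : i = 0
        · subst hi0
          simpa [acv, Fin.last] using pathsum_ends M pd (n+1) g g
        · obtain ⟨i', rfl⟩ : ∃ i', i = i' + 1 :=
            ⟨i - 1, by omega⟩
          have e1 : (∑ x : Fin (n+2) → Ω, pathP M pd (n+1) x *
              (g (x ⟨i' + 1, by omega⟩) * g (x ⟨n + 1, by omega⟩)))
              = ∑ y : Fin (n+1) → Ω, pathP M pd n y *
                (g (y ⟨i', by omega⟩) * g (y ⟨n, by omega⟩)) :=
            sumout_first hst n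
              (fun y => g (y ⟨i', by omega⟩) * g (y ⟨n, by omega⟩))
          have e2 := ih i' n (by omega) (le_refl n)
          have : (n + 1) - (i' + 1) = n - i' := by omega
          rw [this]
          exact e1.trans e2

lemma traceProb_eq (M : Matrix Ω Ω ℝ) (pd : Ω → ℝ) (n : ℕ) (x : Fin (n+1) → Ω) :
    traceProb M pd (n+1) x = pathP M pd n x := by
  unfold traceProb pathP
  rw [dif_pos (Nat.succ_pos n), Fin.prod_univ_castSucc]
  have hlast : (if h : ((Fin.last n : ℕ) + 1 < n + 1) then
      M (x (Fin.last n)) (x ⟨(Fin.last n : ℕ) + 1, h⟩) else 1) = 1 :=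
    dif_neg (by simp)
  rw [hlast, mul_one]
  congr 1
  refine Finset.prod_congr rfl fun j _ => ?_
  have hj : ((j.castSucc : Fin (n+1)) : ℕ) + 1 < n + 1 := by
    have := j.isLt; simp only [Fin.coe_castSucc]; omega
  rw [dif_pos hj]
  congr 1

lemma traceVar_eq (M : Matrix Ω Ω ℝ) (pd : Ω → ℝ) (f : Ω → ℝ) (n : ℕ) :
    traceVar M pd f (n+1) = (∑ i : Fin (n+1), ∑ j : Fin (n+1),
      ∑ x : Fin (n+1) → Ω, pathP M pd n x *
        ((f (x i) - stMean pd f) * (f (x j) - stMean pd f))) / ((n+1 : ℝ))^2 := by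
  set μ := stMean pd f with hμ
  set g : Ω → ℝ := fun a => f a - μ with hg
  unfold traceVar traceExp
  have hT0 : ((n : ℝ) + 1) ≠ 0 := by positivity
  have step : ∀ x : Fin (n+1) → Ω, traceProb M pd (n+1) x *
      ((∑ i, f (x i)) / ((n+1 : ℕ) : ℝ) - μ) ^ 2
      = ∑ i : Fin (n+1), ∑ j : Fin (n+1),
          pathP M pd n x * (g (x i) * g (x j)) / ((n+1:ℝ))^2 := by
    intro x
    have h1 : (∑ i, f (x i)) / ((n+1 : ℕ) : ℝ) - μ = (∑ i, g (x i)) / ((n+1:ℝ)) := by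
      rw [hg]
      rw [Finset.sum_sub_distrib, Finset.sum_const, Finset.card_univ, Fintype.card_fin]
      rw [nsmul_eq_mul]
      push_cast
      field_simp
    rw [traceProb_eq, h1, div_pow]
    rw [sq (∑ i, g (x i)), Finset.sum_mul_sum]
    rw [Finset.sum_div, Finset.mul_sum]
    refine Finset.sum_congr rfl fun i _ => ?_
    rw [Finset.sum_div, Finset.mul_sum]
    exact Finset.sum_congr rfl fun j _ => by ring
  rw [Finset.sum_congr rfl fun x _ => step x]
  rw [Finset.sum_comm]
  rw [Finset.sum_div]
  refine Finset.sum_congr rfl fun i _ => ?_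
  rw [Finset.sum_comm, Finset.sum_div]
  refine Finset.sum_congr rfl fun j _ => ?_
  rw [Finset.sum_div]


lemma count_dist (γ : ℕ → ℝ) (T : ℕ) :
    ∑ i ∈ Finset.range T, ∑ j ∈ Finset.range T, γ (Nat.dist i j)
      = (∑ k ∈ Finset.range T, 2 * ((T : ℝ) - k) * γ k) - T * γ 0 := by
  induction T with
  | zero => simp
  | succ T ih =>
      rw [Finset.sum_range_succ]
      have inner : ∀ i ∈ Finset.range T, ∑ j ∈ Finset.range (T+1), γ (Nat.dist i j)
          = (∑ j ∈ Finset.range T, γ (Nat.dist i j)) + γ (T - i) := by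
        intro i hi
        rw [Finset.sum_range_succ]
        congr 2
        exact Nat.dist_eq_sub_of_le (le_of_lt (Finset.mem_range.mp hi))
      rw [Finset.sum_congr rfl inner, Finset.sum_add_distrib, ih]
      have lastrow : ∑ j ∈ Finset.range (T+1), γ (Nat.dist T j)
          = (∑ j ∈ Finset.range T, γ (T - j)) + γ 0 := by
        rw [Finset.sum_range_succ]
        congr 1
        · refine Finset.sum_congr rfl fun j hj => ?_
          rw [Nat.dist_comm,
            Nat.dist_eq_sub_of_le (le_of_lt (Finset.mem_range.mp hj))]
        · simp [Nat.dist_self]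
      rw [lastrow]
      have refl1 : ∑ i ∈ Finset.range T, γ (T - i)
          = ∑ k ∈ Finset.range T, γ (k+1) := by
        rw [← Finset.sum_range_reflect]
        refine Finset.sum_congr rfl fun j hj => ?_
        congr 1
        have := Finset.mem_range.mp hj
        omega
      have hs1 : ∑ k ∈ Finset.range (T+1), 2 * (((T:ℕ)+1 : ℝ) - k) * γ k
          = (∑ k ∈ Finset.range T, 2 * ((T : ℝ) - k) * γ k)
            + 2 * (∑ k ∈ Finset.range T, γ k) + 2 * γ T := by
        rw [Finset.sum_range_succ, Finset.mul_sum, ← Finset.sum_add_distrib]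
        rw [Finset.sum_congr rfl fun k _ =>
          (by ring : 2 * (((T:ℕ)+1 : ℝ) - k) * γ k
            = 2 * ((T : ℝ) - k) * γ k + 2 * γ k)]
        push_cast
        ring
      have hs2 : ∑ k ∈ Finset.range T, γ (k+1)
          = (∑ k ∈ Finset.range T, γ k) + γ T - γ 0 := by
        have h1 := Finset.sum_range_succ γ T
        have h2 := Finset.sum_range_succ' γ T
        linarith
      push_cast
      push_cast at hs1
      rw [refl1, hs2] at *
      linarith [hs1]

lemma coeff_mono (γ : ℕ → ℝ) (hγ : ∀ k, 0 ≤ γ k) (T T' : ℕ)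
    (hT : 1 ≤ T) (hle : T ≤ T') :
    (∑ i ∈ Finset.range T, ∑ j ∈ Finset.range T, γ (Nat.dist i j)) / T
      ≤ (∑ i ∈ Finset.range T', ∑ j ∈ Finset.range T', γ (Nat.dist i j)) / T' := by
  have hT0 : (0:ℝ) < T := by exact_mod_cast hT
  have hT'0 : (0:ℝ) < T' := by
    have : 1 ≤ T' := le_trans hT hle
    exact_mod_cast this
  have key : ∀ S : ℕ, 0 < (S:ℝ) →
      (∑ i ∈ Finset.range S, ∑ j ∈ Finset.range S, γ (Nat.dist i j)) / S
        = (∑ k ∈ Finset.range S, (2 * ((S : ℝ) - k) / S) * γ k) - γ 0 := by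
    intro S hS
    rw [count_dist, sub_div, Finset.sum_div]
    congr 1
    · exact Finset.sum_congr rfl fun k _ => by ring
    · field_simp
  rw [key T hT0, key T' hT'0]
  have step1 : ∑ k ∈ Finset.range T, (2 * ((T : ℝ) - k) / T) * γ k
      ≤ ∑ k ∈ Finset.range T, (2 * ((T' : ℝ) - k) / T') * γ k := by
    refine Finset.sum_le_sum fun k hk => ?_
    have hkT : (k:ℝ) < T := by exact_mod_cast Finset.mem_range.mp hk
    have hTT' : (T:ℝ) ≤ T' := by exact_mod_cast hle
    have hc : 2 * ((T : ℝ) - k) / T ≤ 2 * ((T' : ℝ) - k) / T' := by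
      rw [div_le_div_iff₀ hT0 hT'0]
      have hk0 : (0:ℝ) ≤ k := by positivity
      nlinarith
    exact mul_le_mul_of_nonneg_right hc (hγ k)
  have step2 : ∑ k ∈ Finset.range T, (2 * ((T' : ℝ) - k) / T') * γ k
      ≤ ∑ k ∈ Finset.range T', (2 * ((T' : ℝ) - k) / T') * γ k := by
    refine Finset.sum_le_sum_of_subset_of_nonneg
      (Finset.range_subset_range.mpr hle) fun k hk _ => ?_
    have hkT : (k:ℝ) < T' := by exact_mod_cast Finset.mem_range.mp hk
    have : (0:ℝ) ≤ 2 * ((T' : ℝ) - k) / T' :=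
      div_nonneg (by nlinarith) (le_of_lt hT'0)
    exact mul_nonneg this (hγ k)
  linarith


end TVAux

/-- For a lazy reversible ergodic chain, `T ↦ T · v_T` is monotone:
for positive `T ≤ T'`, `T·v_T ≤ T'·v_{T'}` (in particular `v_π ≤ 2 v₂ ≤ 3 v₃ ≤ ⋯`,
since `v_π = v₁`). -/
theorem trace_variance_monotone
    {Ω : Type*} [Fintype Ω] [DecidableEq Ω]
    (M : Matrix Ω Ω ℝ) (pd : Ω → ℝ) (f : Ω → ℝ)
    (hM : IsStochastic M) (hpd : IsStationaryDist M pd) (herg : IsErgodic M)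
    (hlazy : IsLazy M) (hrev : IsReversible M pd)
    (T T' : ℕ) (hT : 1 ≤ T) (hle : T ≤ T') :
    (T : ℝ) * traceVar M pd f T ≤ (T' : ℝ) * traceVar M pd f T' := by
  classical
  obtain ⟨n, rfl⟩ : ∃ n, T = n + 1 := ⟨T - 1, by omega⟩
  obtain ⟨m, rfl⟩ : ∃ m, T' = m + 1 := ⟨T' - 1, by omega⟩
  have hrow : ∀ x, ∑ y, M x y = 1 := hM.2
  have hpd0 : ∀ x, 0 ≤ pd x := hpd.1.1
  have hst : ∀ y, ∑ x, pd x * M x y = pd y := hpd.2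
  set g : Ω → ℝ := fun a => f a - stMean pd f with hgdef
  have hγ : ∀ k, 0 ≤ acv M pd g k := acv_nonneg hM hpd0 hlazy hrev g
  have hterm : ∀ N : ℕ, ∀ i j : Fin (N+1),
      (∑ x : Fin (N+1) → Ω, pathP M pd N x * (g (x i) * g (x j)))
        = acv M pd g (Nat.dist (i:ℕ) (j:ℕ)) := by
    intro N i j
    rcases le_total (i:ℕ) (j:ℕ) with h | h
    · rw [Nat.dist_eq_sub_of_le h]
      exact joint hrow hst g N i j h (Nat.lt_succ_iff.mp j.isLt)
    · rw [Nat.dist_comm, Nat.dist_eq_sub_of_le h]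
      have e := joint hrow hst g N j i h (Nat.lt_succ_iff.mp i.isLt)
      rw [← e]
      exact Finset.sum_congr rfl fun x _ => by ring
  have main_eq : ∀ N : ℕ, ((N + 1 : ℕ) : ℝ) * traceVar M pd f (N+1)
      = (∑ i ∈ Finset.range (N+1), ∑ j ∈ Finset.range (N+1),
          acv M pd g (Nat.dist i j)) / ((N + 1 : ℕ) : ℝ) := by
    intro N
    rw [traceVar_eq]
    have e1 : (∑ i : Fin (N+1), ∑ j : Fin (N+1),
        ∑ x : Fin (N+1) → Ω, pathP M pd N x *
          ((f (x i) - stMean pd f) * (f (x j) - stMean pd f)))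
        = ∑ i ∈ Finset.range (N+1), ∑ j ∈ Finset.range (N+1),
            acv M pd g (Nat.dist i j) := by
      rw [Finset.sum_congr rfl fun i (_ : i ∈ Finset.univ) =>
        Finset.sum_congr rfl fun j (_ : j ∈ Finset.univ) => hterm N i j]
      rw [← Fin.sum_univ_eq_sum_range
        (fun i => ∑ j ∈ Finset.range (N+1), acv M pd g (Nat.dist i j)) (N+1)]
      exact Finset.sum_congr rfl fun i _ =>
        (Fin.sum_univ_eq_sum_range (fun j => acv M pd g (Nat.dist (i:ℕ) j)) (N+1))
    rw [e1]
    have hN0 : ((N + 1 : ℕ) : ℝ) ≠ 0 := by positivity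
    push_cast
    push_cast at hN0
    field_simp
  rw [main_eq n, main_eq m]
  exact coeff_mono (acv M pd g) hγ (n+1) (m+1) (by omega) (by exact_mod_cast hle)
end

section
/- Let M be a lazy reversible ergodic Markov chain on a finite state space Ω with stationary distribution π, and let f : Ω → ℝ. Then for every i ≥ 1 the stationary autocovariance C_i = Cov(f(X₁), f(X_{1+i})) along a stationary trace of M is nonnegative; moreover C_i ≤ λ^i · v_π, where λ is the second largest absolute eigenvalue of M and v_π = Var_π[f]. -/
open Finset
open scoped BigOperators Classical

section MarkovDefs

variable {Ω : Type*} [Fintype Ω] [DecidableEq Ω]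

/-- `p` is a stationary distribution of the chain `M`. -/
def IsStationaryDistr (M : Matrix Ω Ω ℝ) (p : Ω → ℝ) : Prop :=
  IsProbDist p ∧ ∀ y, ∑ x, p x * M x y = p y

section AuxLemmas
variable {Ω : Type*} [Fintype Ω] [DecidableEq Ω]

lemma aux_abs_eig_le {N : Matrix Ω Ω ℝ} {c : ℝ}
    (hnn : ∀ x y, 0 ≤ N x y) (hrow : ∀ x, ∑ y, N x y ≤ c)
    {μ : ℝ} {v : Ω → ℝ} (hv : v ≠ 0) (h : N.mulVec v = μ • v) : |μ| ≤ c := by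
  obtain ⟨x0, hx0⟩ : ∃ x, v x ≠ 0 := by
    by_contra hc; push_neg at hc; exact hv (funext fun x => hc x)
  obtain ⟨z, -, hz⟩ := Finset.exists_max_image Finset.univ (fun x => |v x|)
    ⟨x0, Finset.mem_univ x0⟩
  have hvz : 0 < |v z| := lt_of_lt_of_le (abs_pos.mpr hx0) (hz x0 (Finset.mem_univ x0))
  have h2 : ∑ y, N z y * v y = μ * v z := by
    have := congrFun h z
    simpa [Matrix.mulVec, dotProduct] using this
  have h1 : |μ| * |v z| ≤ c * |v z| := by
    calc |μ| * |v z| = |∑ y, N z y * v y| := by rw [← abs_mul, h2]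
      _ ≤ ∑ y, |N z y * v y| := Finset.abs_sum_le_sum_abs _ _
      _ ≤ ∑ y, N z y * |v z| := by
          apply Finset.sum_le_sum; intro y _
          rw [abs_mul, abs_of_nonneg (hnn z y)]
          exact mul_le_mul_of_nonneg_left (hz y (Finset.mem_univ y)) (hnn z y)
      _ = (∑ y, N z y) * |v z| := by rw [Finset.sum_mul]
      _ ≤ c * |v z| := mul_le_mul_of_nonneg_right (hrow z) (abs_nonneg _)
  exact le_of_mul_le_mul_right h1 hvz

lemma aux_eig_range {M : Matrix Ω Ω ℝ} (hM : IsStochastic M) (hlazy : IsLazy M)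
    {μ : ℝ} (h : IsEigenvalue M μ) : 0 ≤ μ ∧ μ ≤ 1 := by
  obtain ⟨v, hv, hvec⟩ := h
  have h1 : |μ| ≤ 1 := aux_abs_eig_le hM.1 (fun x => le_of_eq (hM.2 x)) hv hvec
  set N : Matrix Ω Ω ℝ := M - (1/2 : ℝ) • (1 : Matrix Ω Ω ℝ) with hN
  have hnn : ∀ x y, 0 ≤ N x y := by
    intro x y
    by_cases hxy : x = y
    · subst hxy
      simp only [hN, Matrix.sub_apply, Matrix.smul_apply, Matrix.one_apply_eq, smul_eq_mul,
        mul_one]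
      linarith [hlazy x]
    · simp only [hN, Matrix.sub_apply, Matrix.smul_apply, Matrix.one_apply_ne hxy, smul_eq_mul,
        mul_zero, sub_zero]
      exact hM.1 x y
  have hrow : ∀ x, ∑ y, N x y ≤ 1/2 := by
    intro x
    have : ∑ y, N x y = (∑ y, M x y) - 1/2 := by
      simp [hN, Matrix.sub_apply, Finset.sum_sub_distrib, Matrix.one_apply]
    rw [this, hM.2 x]; norm_num
  have hvec2 : N.mulVec v = (μ - 1/2) • v := by
    rw [hN, Matrix.sub_mulVec, Matrix.smul_mulVec, Matrix.one_mulVec, hvec, sub_smul]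
  have h2 : |μ - 1/2| ≤ 1/2 := aux_abs_eig_le hnn hrow hv hvec2
  rw [abs_le] at h1 h2
  constructor <;> linarith [h1.1, h1.2, h2.1, h2.2]

lemma aux_pow_stochastic {M : Matrix Ω Ω ℝ} (hM : IsStochastic M) (k : ℕ) :
    IsStochastic (M ^ k) := by
  induction k with
  | zero =>
    refine ⟨fun x y => ?_, fun x => ?_⟩
    · rw [pow_zero]; by_cases h : x = y <;> simp [Matrix.one_apply, h]
    · rw [pow_zero]; simp [Matrix.one_apply]
  | succ n ih =>
    refine ⟨fun x y => ?_, fun x => ?_⟩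
    · rw [pow_succ, Matrix.mul_apply]
      exact Finset.sum_nonneg fun z _ => mul_nonneg (ih.1 x z) (hM.1 z y)
    · rw [pow_succ]
      simp only [Matrix.mul_apply]
      rw [Finset.sum_comm]
      simp_rw [← Finset.mul_sum, hM.2, mul_one]
      exact ih.2 x

lemma aux_stat_pow {M : Matrix Ω Ω ℝ} {p : Ω → ℝ} (hst : ∀ y, ∑ x, p x * M x y = p y)
    (k : ℕ) : ∀ y, ∑ x, p x * (M ^ k) x y = p y := by
  induction k with
  | zero => intro y; simp [Matrix.one_apply]
  | succ n ih =>
    intro y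
    simp_rw [pow_succ, Matrix.mul_apply, Finset.mul_sum, ← mul_assoc]
    rw [Finset.sum_comm]
    simp_rw [← Finset.sum_mul, ih, hst y]

lemma aux_pd_pos {M : Matrix Ω Ω ℝ} {p : Ω → ℝ}
    (hp0 : ∀ x, 0 ≤ p x) (hp1 : ∑ x, p x = 1)
    (hst : ∀ y, ∑ x, p x * M x y = p y) (herg : IsErgodic M) : ∀ y, 0 < p y := by
  obtain ⟨k, hk⟩ := herg
  intro y
  obtain ⟨x0, hx0⟩ : ∃ x, 0 < p x := by
    by_contra hc; push_neg at hc
    have : ∑ x, p x ≤ 0 := Finset.sum_nonpos fun x _ => hc x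
    rw [hp1] at this; linarith
  have h := aux_stat_pow hst k y
  rw [← h]
  exact Finset.sum_pos' (fun x _ => mul_nonneg (hp0 x) (le_of_lt (hk x y)))
    ⟨x0, Finset.mem_univ x0, mul_pos hx0 (hk x0 y)⟩

lemma aux_fixed_const {M : Matrix Ω Ω ℝ} (hM : IsStochastic M) (herg : IsErgodic M)
    {v : Ω → ℝ} (h : M.mulVec v = v) : ∃ c : ℝ, ∀ x, v x = c := by
  obtain ⟨k, hk⟩ := herg
  have hpow : ∀ n : ℕ, (M ^ n).mulVec v = v := by
    intro n; induction n with
    | zero => simp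
    | succ n ih => rw [pow_succ', ← Matrix.mulVec_mulVec, ih, h]
  rcases isEmpty_or_nonempty Ω with hΩ | hΩ
  · exact ⟨0, fun x => (IsEmpty.false x).elim⟩
  obtain ⟨z, -, hz⟩ := Finset.exists_max_image Finset.univ v
    ⟨Classical.arbitrary Ω, Finset.mem_univ _⟩
  refine ⟨v z, fun x => ?_⟩
  have h1 : ∑ y, (M ^ k) z y * v y = v z := by
    have := congrFun (hpow k) z
    simpa [Matrix.mulVec, dotProduct] using this
  have hsum : ∑ y, (M ^ k) z y * (v z - v y) = 0 := by
    simp_rw [mul_sub, Finset.sum_sub_distrib, h1, ← Finset.sum_mul,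
      (aux_pow_stochastic hM k).2 z, one_mul, sub_self]
  have hall := (Finset.sum_eq_zero_iff_of_nonneg (fun y _ =>
    mul_nonneg ((aux_pow_stochastic hM k).1 z y)
      (sub_nonneg.mpr (hz y (Finset.mem_univ y))))).mp hsum
  have hx := hall x (Finset.mem_univ x)
  rcases mul_eq_zero.mp hx with h' | h'
  · exact absurd h' (ne_of_gt (hk z x))
  · linarith [sub_eq_zero.mp h']

end AuxLemmas

end MarkovDefs

/-- For a lazy reversible ergodic chain, the stationary autocovariances
are nonnegative and satisfy `C_i ≤ λ^i · v_π`, where `λ` is the second largest absolute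
eigenvalue. -/
theorem autocov_nonneg_and_le
    {Ω : Type*} [Fintype Ω] [DecidableEq Ω]
    (M : Matrix Ω Ω ℝ) (pd : Ω → ℝ) (f : Ω → ℝ)
    (hM : IsStochastic M) (hpd : IsStationaryDistr M pd) (herg : IsErgodic M)
    (hlazy : IsLazy M) (hrev : IsReversible M pd)
    (i : ℕ) (hi : 1 ≤ i) :
    0 ≤ autocov M pd f i ∧
      autocov M pd f i ≤ secondEigenvalue M ^ i * stVar pd f := by
  classical
  obtain ⟨⟨hpd0, hpd1⟩, hst⟩ := hpd
  have hpdpos : ∀ x, 0 < pd x := aux_pd_pos hpd0 hpd1 hst herg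
  set m : ℝ := stMean pd f with hm
  set σ : Ω → ℝ := fun x => Real.sqrt (pd x) with hσ
  have hσpos : ∀ x, 0 < σ x := fun x => Real.sqrt_pos.mpr (hpdpos x)
  have hσsq : ∀ x, σ x * σ x = pd x := fun x => Real.mul_self_sqrt (hpdpos x).le
  set g : Ω → ℝ := fun x => σ x * (f x - m) with hg
  set S : Matrix Ω Ω ℝ := Matrix.of (fun x y => σ x * M x y * (σ y)⁻¹) with hSdef
  have hSapp : ∀ x y, S x y = σ x * M x y * (σ y)⁻¹ := fun x y => rfl
  have hsymm : ∀ x y, S x y = S y x := by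
    intro x y
    rw [hSapp, hSapp]
    have h1 := hrev x y
    field_simp [(hσpos x).ne', (hσpos y).ne']
    linear_combination M x y * hσsq x - M y x * hσsq y + h1
  have hST : S.transpose = S := Matrix.ext fun x y => hsymm y x
  have hSH : S.IsHermitian := Matrix.ext fun x y => by
    rw [Matrix.conjTranspose_apply, star_trivial]; exact hsymm y x
  have hSpow : ∀ (n : ℕ) (x y : Ω), (S ^ n) x y = σ x * (M ^ n) x y * (σ y)⁻¹ := by
    intro n
    induction n with
    | zero =>
      intro x y
      by_cases h : x = y
      · subst h
        simp [Matrix.one_apply_eq, mul_inv_cancel₀ (hσpos x).ne']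
      · simp [Matrix.one_apply_ne h]
    | succ n ih =>
      intro x y
      rw [pow_succ, pow_succ, Matrix.mul_apply, Matrix.mul_apply]
      have hterm : ∀ z, (S ^ n) x z * S z y
          = σ x * ((M ^ n) x z * M z y) * (σ y)⁻¹ := by
        intro z
        rw [ih, hSapp]
        have h2 : (σ z)⁻¹ * σ z = 1 := inv_mul_cancel₀ (hσpos z).ne'
        linear_combination (σ x * (M ^ n) x z * M z y * (σ y)⁻¹) * h2
      rw [Finset.sum_congr rfl fun z _ => hterm z]
      rw [Finset.mul_sum, Finset.sum_mul]
  have htrans : ∀ (w : Ω → ℝ) (μ : ℝ), w ≠ 0 → S.mulVec w = μ • w → IsEigenvalue M μ := by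
    intro w μ hw hvec
    refine ⟨fun x => (σ x)⁻¹ * w x, ?_, ?_⟩
    · intro hcontra
      apply hw; funext x
      have hx := congrFun hcontra x
      simp only [Pi.zero_apply] at hx ⊢
      have : w x = σ x * ((σ x)⁻¹ * w x) := by
        rw [← mul_assoc, mul_inv_cancel₀ (hσpos x).ne', one_mul]
      rw [this, hx, mul_zero]
    · funext x
      have hx := congrFun hvec x
      simp only [Matrix.mulVec, dotProduct, Pi.smul_apply, smul_eq_mul, hSapp] at hx
      show ∑ y, M x y * ((σ y)⁻¹ * w y) = μ * ((σ x)⁻¹ * w x)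
      have h3 : ∑ y, M x y * ((σ y)⁻¹ * w y)
          = (σ x)⁻¹ * ∑ y, σ x * M x y * (σ y)⁻¹ * w y := by
        rw [Finset.mul_sum]
        apply Finset.sum_congr rfl
        intro y _
        have h2 : (σ x)⁻¹ * σ x = 1 := inv_mul_cancel₀ (hσpos x).ne'
        linear_combination (M x y * (σ y)⁻¹ * w y) * h2.symm
      rw [h3, hx]; ring
  have hone : ∀ (w : Ω → ℝ), S.mulVec w = w → ∃ c' : ℝ, ∀ x, w x = c' * σ x := by
    intro w hw
    have hMv : M.mulVec (fun x => (σ x)⁻¹ * w x) = fun x => (σ x)⁻¹ * w x := by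
      funext x
      have hx := congrFun hw x
      simp only [Matrix.mulVec, dotProduct, hSapp] at hx
      show ∑ y, M x y * ((σ y)⁻¹ * w y) = (σ x)⁻¹ * w x
      have h3 : ∑ y, M x y * ((σ y)⁻¹ * w y)
          = (σ x)⁻¹ * ∑ y, σ x * M x y * (σ y)⁻¹ * w y := by
        rw [Finset.mul_sum]
        apply Finset.sum_congr rfl
        intro y _
        have h2 : (σ x)⁻¹ * σ x = 1 := inv_mul_cancel₀ (hσpos x).ne'
        linear_combination (M x y * (σ y)⁻¹ * w y) * h2.symm
      rw [h3, hx]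
    obtain ⟨c', hc'⟩ := aux_fixed_const hM herg hMv
    refine ⟨c', fun x => ?_⟩
    have := hc' x
    have hwx : w x = σ x * ((σ x)⁻¹ * w x) := by
      rw [← mul_assoc, mul_inv_cancel₀ (hσpos x).ne', one_mul]
    rw [hwx, this]; ring
  have hgσ : ∑ x, σ x * g x = 0 := by
    have hterm : ∀ x, σ x * g x = pd x * f x - pd x * m := by
      intro x
      simp only [hg]
      rw [← mul_assoc, hσsq x]; ring
    rw [Finset.sum_congr rfl fun x _ => hterm x, Finset.sum_sub_distrib, ← Finset.sum_mul, hpd1]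
    simp [hm, stMean]
  -- spectral part
  set b := hSH.eigenvectorBasis with hb
  set μ := hSH.eigenvalues with hμ
  set e : Ω → Ω → ℝ := fun j x => b j x with he
  have hinner : ∀ v w : EuclideanSpace ℝ Ω, (inner ℝ v w : ℝ) = ∑ x, v x * w x := by
    intro v w
    simp [PiLp.inner_apply, RCLike.inner_apply, mul_comm]
  have hbvec : ∀ j, S.mulVec (e j) = μ j • e j := fun j => hSH.mulVec_eigenvectorBasis j
  have hbpow : ∀ (n : ℕ) (j : Ω), (S ^ n).mulVec (e j) = (μ j ^ n) • e j := by
    intro n j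
    induction n with
    | zero => simp [Matrix.one_mulVec]
    | succ n ih =>
      rw [pow_succ', ← Matrix.mulVec_mulVec, ih, Matrix.mulVec_smul, hbvec, smul_smul,
        ← pow_succ]
  set c : Ω → ℝ := fun j => ∑ x, e j x * g x with hc
  have key : ∀ n : ℕ, ∑ x, g x * ((S ^ n).mulVec g) x = ∑ j, μ j ^ n * (c j) ^ 2 := by
    intro n
    have h2 := b.sum_inner_mul_inner (WithLp.toLp 2 g : EuclideanSpace ℝ Ω)
      (WithLp.toLp 2 ((S ^ n).mulVec g) : EuclideanSpace ℝ Ω)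
    simp only [hinner] at h2
    have h2' : ∑ j, (∑ x, g x * e j x) * (∑ x, e j x * ((S ^ n).mulVec g) x)
        = ∑ x, g x * ((S ^ n).mulVec g) x := h2
    rw [← h2']
    apply Finset.sum_congr rfl
    intro j _
    have h3 : ∑ x, g x * e j x = c j := by
      rw [hc]; apply Finset.sum_congr rfl; intro x _; ring
    have hTn : (S ^ n).transpose = S ^ n := by rw [Matrix.transpose_pow, hST]
    have hsymn : ∀ x y : Ω, (S ^ n) x y = (S ^ n) y x := by
      intro x y
      have h := congrFun (congrFun hTn y) x
      exact h
    have h4 : ∑ x, e j x * ((S ^ n).mulVec g) x = μ j ^ n * c j := by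
      calc ∑ x, e j x * ((S ^ n).mulVec g) x
          = ∑ x, ∑ y, e j x * ((S ^ n) x y * g y) := by
            apply Finset.sum_congr rfl; intro x _
            rw [show ((S ^ n).mulVec g) x = ∑ y, (S ^ n) x y * g y by
              simp [Matrix.mulVec, dotProduct], Finset.mul_sum]
        _ = ∑ y, (∑ x, (S ^ n) y x * e j x) * g y := by
            rw [Finset.sum_comm]
            apply Finset.sum_congr rfl; intro y _
            rw [Finset.sum_mul]
            apply Finset.sum_congr rfl; intro x _
            rw [hsymn x y]; ring
        _ = ∑ y, (μ j ^ n * e j y) * g y := by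
            apply Finset.sum_congr rfl; intro y _
            rw [show (∑ x, (S ^ n) y x * e j x) = ((S ^ n).mulVec (e j)) y by
              simp [Matrix.mulVec, dotProduct], hbpow n j]
            simp
        _ = μ j ^ n * c j := by
            rw [hc, Finset.mul_sum]
            apply Finset.sum_congr rfl; intro y _; ring
    rw [h3, h4]; ring
  have hauto : ∀ n : ℕ, autocov M pd f n = ∑ x, g x * ((S ^ n).mulVec g) x := by
    intro n
    rw [autocov, ← hm]
    apply Finset.sum_congr rfl
    intro x _
    rw [show ((S ^ n).mulVec g) x = ∑ y, (S ^ n) x y * g y by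
      simp [Matrix.mulVec, dotProduct], Finset.mul_sum]
    apply Finset.sum_congr rfl
    intro y _
    rw [hSpow]
    simp only [hg]
    have h2 : (σ y)⁻¹ * σ y = 1 := inv_mul_cancel₀ (hσpos y).ne'
    have h1 : pd x = σ x * σ x := (hσsq x).symm
    rw [h1]
    field_simp [(hσpos y).ne']
  have hvar : stVar pd f = ∑ j, (c j) ^ 2 := by
    have h0 := key 0
    simp only [pow_zero, Matrix.one_mulVec, one_mul] at h0
    rw [stVar, ← hm, ← h0]
    apply Finset.sum_congr rfl
    intro x _
    simp only [hg]
    rw [← hσsq x]; ring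
  have hbne : ∀ j, e j ≠ 0 := fun j h => b.orthonormal.ne_zero j (by ext x; exact congrFun h x)
  have heigM : ∀ j, IsEigenvalue M (μ j) := fun j => htrans (e j) (μ j) (hbne j) (hbvec j)
  have hμrange : ∀ j, 0 ≤ μ j ∧ μ j ≤ 1 := fun j => aux_eig_range hM hlazy (heigM j)
  have hczero : ∀ j, μ j = 1 → c j = 0 := by
    intro j hj
    obtain ⟨c', hc'⟩ := hone (e j) (by rw [hbvec j, hj, one_smul])
    have h6 : c j = c' * ∑ x, σ x * g x := by
      rw [hc, Finset.mul_sum]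
      apply Finset.sum_congr rfl
      intro x _
      rw [hc' x]; ring
    rw [h6, hgσ, mul_zero]
  have hBdd : BddAbove {s : ℝ | ∃ μ' : ℝ, IsEigenvalue M μ' ∧ μ' ≠ 1 ∧ s = |μ'|} := by
    refine ⟨1, fun s hs => ?_⟩
    obtain ⟨μ', hμ', -, rfl⟩ := hs
    obtain ⟨v, hv, hvec⟩ := hμ'
    exact aux_abs_eig_le hM.1 (fun x => le_of_eq (hM.2 x)) hv hvec
  have hlam : ∀ j, c j ≠ 0 → μ j ≤ secondEigenvalue M := by
    intro j hcj
    have hj1 : μ j ≠ 1 := fun h => hcj (hczero j h)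
    have hmem : |μ j| ∈ {s : ℝ | ∃ μ' : ℝ, IsEigenvalue M μ' ∧ μ' ≠ 1 ∧ s = |μ'|} :=
      ⟨μ j, heigM j, hj1, rfl⟩
    calc μ j ≤ |μ j| := le_abs_self _
      _ ≤ secondEigenvalue M := le_csSup hBdd hmem
  constructor
  · rw [hauto i, key i]
    exact Finset.sum_nonneg fun j _ => mul_nonneg (pow_nonneg (hμrange j).1 i) (sq_nonneg _)
  · rw [hauto i, key i, hvar, Finset.mul_sum]
    apply Finset.sum_le_sum
    intro j _
    by_cases hcj : c j = 0
    · simp [hcj]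
    · exact mul_le_mul_of_nonneg_right
        (pow_le_pow_left₀ (hμrange j).1 (hlam j hcj) i) (sq_nonneg _)
end

section
/- Let M be a reversible ergodic Markov chain on a finite state space Ω with mixing time τ_mix, and let M^{(T)} be its T-trace chain. If T ≥ τ_mix(M), then the second largest absolute eigenvalue of M^{(T)} is at most 4/5. -/
open Finset
open scoped BigOperators Classical

section AuxLemmas
variable {Ω : Type*} [Fintype Ω] [DecidableEq Ω]
variable {Ω : Type*} [Fintype Ω] [DecidableEq Ω]

lemma isStochastic_pow {M : Matrix Ω Ω ℝ} (hM : IsStochastic M) (t : ℕ) :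
    IsStochastic (M ^ t) := by
  induction t with
  | zero =>
    constructor
    · intro x y
      simp [Matrix.one_apply]
      split <;> norm_num
    · intro x
      simp [Matrix.one_apply]
  | succ t ih =>
    rw [pow_succ]
    constructor
    · intro x y
      rw [Matrix.mul_apply]
      exact Finset.sum_nonneg fun z _ => mul_nonneg (ih.1 x z) (hM.1 z y)
    · intro x
      calc ∑ y, ((M ^ t) * M) x y = ∑ y, ∑ z, (M ^ t) x z * M z y := by
            simp [Matrix.mul_apply]
        _ = ∑ z, (M ^ t) x z * ∑ y, M z y := by
            rw [Finset.sum_comm]; simp [Finset.mul_sum]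
        _ = 1 := by simp [hM.2, ih.2 x]

lemma stationary_pow {M : Matrix Ω Ω ℝ} {pd : Ω → ℝ}
    (hpd : ∀ y, ∑ x, pd x * M x y = pd y) (t : ℕ) :
    ∀ y, ∑ x, pd x * (M ^ t) x y = pd y := by
  induction t with
  | zero => intro y; simp [Matrix.one_apply]
  | succ t ih =>
    intro y
    rw [pow_succ]
    calc ∑ x, pd x * ((M ^ t) * M) x y
        = ∑ x, ∑ z, pd x * ((M ^ t) x z * M z y) := by
          simp [Matrix.mul_apply, Finset.mul_sum]
      _ = ∑ z, (∑ x, pd x * (M ^ t) x z) * M z y := by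
          rw [Finset.sum_comm]
          congr 1; ext z; rw [Finset.sum_mul]; congr 1; ext x; ring
      _ = ∑ z, pd z * M z y := by simp [ih]
      _ = pd y := hpd y

/-- Diameter contraction under Doeblin condition. -/
lemma diam_pow_le {P : Matrix Ω Ω ℝ} (hP : IsStochastic P) {ε : ℝ}
    (hε : ∀ x y, ε ≤ P x y) (m : ℕ) (x x' y : Ω) :
    (P ^ m) x y - (P ^ m) x' y ≤ (1 - (Fintype.card Ω : ℝ) * ε) ^ m := by
  have hc0 : 0 ≤ 1 - (Fintype.card Ω : ℝ) * ε := by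
    have h1 : (Fintype.card Ω : ℝ) * ε ≤ ∑ y, P x y := by
      rw [← Finset.card_univ, ← nsmul_eq_mul, ← Finset.sum_const]
      exact Finset.sum_le_sum fun z _ => hε x z
    rw [hP.2 x] at h1; linarith
  induction m generalizing x x' y with
  | zero =>
    simp only [pow_zero, Matrix.one_apply]
    split <;> split <;> norm_num
  | succ m ih =>
    rw [pow_succ']
    rw [Matrix.mul_apply, Matrix.mul_apply]
    -- obtain min/max of z ↦ (P^m) z y
    obtain ⟨zM, _, hzM⟩ := Finset.exists_max_image Finset.univ
      (fun z => (P ^ m) z y) ⟨x, Finset.mem_univ x⟩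
    obtain ⟨zm, _, hzm⟩ := Finset.exists_min_image Finset.univ
      (fun z => (P ^ m) z y) ⟨x, Finset.mem_univ x⟩
    have hdiam : (P ^ m) zM y - (P ^ m) zm y ≤ (1 - (Fintype.card Ω : ℝ) * ε) ^ m :=
      ih zM zm y
    have key : ∀ w : Ω, ∑ z, P w z * (P ^ m) z y
        = ε * (∑ z, (P ^ m) z y) + ∑ z, (P w z - ε) * (P ^ m) z y := by
      intro w
      rw [Finset.mul_sum, ← Finset.sum_add_distrib]
      congr 1; ext z; ring
    rw [key x, key x']
    have hsum : ∀ w : Ω, ∑ z, (P w z - ε) = 1 - (Fintype.card Ω : ℝ) * ε := by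
      intro w
      rw [Finset.sum_sub_distrib, hP.2 w]
      simp [Finset.card_univ, mul_comm]
    have hub : ∑ z, (P x z - ε) * (P ^ m) z y
        ≤ (1 - (Fintype.card Ω : ℝ) * ε) * (P ^ m) zM y := by
      rw [← hsum x, Finset.sum_mul]
      exact Finset.sum_le_sum fun z _ => mul_le_mul_of_nonneg_left
        (hzM z (Finset.mem_univ z)) (by linarith [hε x z])
    have hlb : (1 - (Fintype.card Ω : ℝ) * ε) * (P ^ m) zm y
        ≤ ∑ z, (P x' z - ε) * (P ^ m) z y := by
      rw [← hsum x', Finset.sum_mul]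
      exact Finset.sum_le_sum fun z _ => mul_le_mul_of_nonneg_left
        (hzm z (Finset.mem_univ z)) (by linarith [hε x' z])
    calc ε * (∑ z, (P ^ m) z y) + ∑ z, (P x z - ε) * (P ^ m) z y
        - (ε * (∑ z, (P ^ m) z y) + ∑ z, (P x' z - ε) * (P ^ m) z y)
        ≤ (1 - (Fintype.card Ω : ℝ) * ε) * (P ^ m) zM y
          - (1 - (Fintype.card Ω : ℝ) * ε) * (P ^ m) zm y := by linarith
      _ = (1 - (Fintype.card Ω : ℝ) * ε) * ((P ^ m) zM y - (P ^ m) zm y) := by ring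
      _ ≤ (1 - (Fintype.card Ω : ℝ) * ε) * (1 - (Fintype.card Ω : ℝ) * ε) ^ m :=
          mul_le_mul_of_nonneg_left hdiam hc0
      _ = (1 - (Fintype.card Ω : ℝ) * ε) ^ (m + 1) := by rw [← pow_succ']

variable {Ω : Type*} [Fintype Ω] [DecidableEq Ω]

/-- Eigenvalue bound from TV closeness to stationarity. -/
lemma eigen_bound (P : Matrix Ω Ω ℝ) (pd : Ω → ℝ)
    (hstat : ∀ y, ∑ x, pd x * P x y = pd y)
    (htv : ∀ x, ∑ y, |P x y - pd y| ≤ 1 / 2)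
    {u : Ω → ℝ} {μ : ℝ} (hu : u ≠ 0) (heig : P.mulVec u = μ • u) (hμ : μ ≠ 1) :
    |μ| ≤ 1 / 2 := by
  -- orthogonality: ∑ pd y * u y = 0
  have horth : ∑ y, pd y * u y = 0 := by
    have h1 : ∑ x, pd x * (P.mulVec u x) = ∑ y, pd y * u y := by
      calc ∑ x, pd x * (P.mulVec u x) = ∑ x, ∑ y, pd x * (P x y * u y) := by
            simp only [Matrix.mulVec, dotProduct, Finset.mul_sum]
        _ = ∑ y, (∑ x, pd x * P x y) * u y := by
            rw [Finset.sum_comm]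
            congr 1; ext y; rw [Finset.sum_mul]; congr 1; ext x; ring
        _ = ∑ y, pd y * u y := by simp [hstat]
    have h2 : ∑ x, pd x * (P.mulVec u x) = μ * ∑ y, pd y * u y := by
      rw [heig]
      simp [Finset.mul_sum]
      congr 1; ext x; ring
    rw [h2] at h1
    have : (μ - 1) * ∑ y, pd y * u y = 0 := by linarith
    rcases mul_eq_zero.1 this with h | h
    · exact absurd (by linarith : μ = 1) hμ
    · exact h
  -- pick maximizer of |u|
  have hex : ∃ x, u x ≠ 0 := by
    by_contra h
    push_neg at h
    exact hu (funext fun x => h x)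
  obtain ⟨x1, hx1⟩ := hex
  obtain ⟨x0, _, hx0⟩ := Finset.exists_max_image Finset.univ
    (fun x => |u x|) ⟨x1, Finset.mem_univ x1⟩
  have hx0pos : 0 < |u x0| := lt_of_lt_of_le (abs_pos.2 hx1) (hx0 x1 (Finset.mem_univ x1))
  have hkey : μ * u x0 = ∑ y, (P x0 y - pd y) * u y := by
    have : P.mulVec u x0 = μ * u x0 := by rw [heig]; rfl
    rw [← this]
    simp only [Matrix.mulVec, dotProduct]
    calc ∑ y, P x0 y * u y = ∑ y, ((P x0 y - pd y) * u y + pd y * u y) := by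
          congr 1; ext y; ring
      _ = ∑ y, (P x0 y - pd y) * u y + ∑ y, pd y * u y := Finset.sum_add_distrib
      _ = ∑ y, (P x0 y - pd y) * u y := by rw [horth]; ring
  have habs : |μ| * |u x0| ≤ (1 / 2) * |u x0| := by
    calc |μ| * |u x0| = |μ * u x0| := (abs_mul μ (u x0)).symm
      _ = |∑ y, (P x0 y - pd y) * u y| := by rw [hkey]
      _ ≤ ∑ y, |(P x0 y - pd y) * u y| := Finset.abs_sum_le_sum_abs _ _
      _ ≤ ∑ y, |P x0 y - pd y| * |u x0| := by
          apply Finset.sum_le_sum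
          intro y _
          rw [abs_mul]
          exact mul_le_mul_of_nonneg_left (hx0 y (Finset.mem_univ y)) (abs_nonneg _)
      _ = (∑ y, |P x0 y - pd y|) * |u x0| := (Finset.sum_mul _ _ _).symm
      _ ≤ (1 / 2) * |u x0| := mul_le_mul_of_nonneg_right (htv x0) (abs_nonneg _)
  exact le_of_mul_le_mul_right (by linarith) hx0pos

/-- Path sum identity. -/
lemma pathSum (M : Matrix Ω Ω ℝ) (u : Ω → ℝ) : ∀ (n : ℕ) (x : Ω),
    ∑ b : Fin (n + 1) → Ω,
      (M x (b 0) * ∏ i : Fin n, M (b i.castSucc) (b i.succ)) * u (b (Fin.last n))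
    = (M ^ (n + 1)).mulVec u x := by
  intro n
  induction n with
  | zero =>
    intro x
    rw [← (Equiv.funUnique (Fin 1) Ω).symm.sum_comp]
    simp [Matrix.mulVec, dotProduct, Equiv.funUnique]
  | succ n ih =>
    intro x
    rw [← (Fin.consEquiv (fun _ : Fin (n + 2) => Ω)).sum_comp]
    rw [Fintype.sum_prod_type]
    have step : ∀ (y : Ω) (c : Fin (n + 1) → Ω),
        (M x ((Fin.cons y c : Fin (n + 2) → Ω) 0) *
          ∏ i : Fin (n + 1), M ((Fin.cons y c : Fin (n + 2) → Ω) i.castSucc)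
            ((Fin.cons y c : Fin (n + 2) → Ω) i.succ)) *
          u ((Fin.cons y c : Fin (n + 2) → Ω) (Fin.last (n + 1)))
        = M x y * ((M y (c 0) * ∏ i : Fin n, M (c i.castSucc) (c i.succ)) * u (c (Fin.last n))) := by
      intro y c
      have h1 : (Fin.cons y c : Fin (n + 2) → Ω) 0 = y := rfl
      have hlast : (Fin.cons y c : Fin (n + 2) → Ω) (Fin.last (n + 1)) = c (Fin.last n) := by
        rw [← Fin.succ_last, Fin.cons_succ]
      have hprod : ∏ i : Fin (n + 1), M ((Fin.cons y c : Fin (n + 2) → Ω) i.castSucc)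
            ((Fin.cons y c : Fin (n + 2) → Ω) i.succ)
          = M y (c 0) * ∏ i : Fin n, M (c i.castSucc) (c i.succ) := by
        rw [Fin.prod_univ_succ]
        refine congrArg₂ (· * ·) rfl (Finset.prod_congr rfl fun i _ => ?_)
        rw [← Fin.succ_castSucc, Fin.cons_succ, Fin.cons_succ]
      rw [h1, hlast, hprod]; ring
    calc ∑ y : Ω, ∑ c : Fin (n + 1) → Ω, _ 
        = ∑ y : Ω, M x y * ∑ c : Fin (n + 1) → Ω,
            (M y (c 0) * ∏ i : Fin n, M (c i.castSucc) (c i.succ)) * u (c (Fin.last n)) := by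
          congr 1; ext y
          rw [Finset.mul_sum]
          congr 1; ext c
          exact step y c
      _ = ∑ y : Ω, M x y * (M ^ (n + 1)).mulVec u y := by
          apply Finset.sum_congr rfl
          intro y _
          rw [ih y]
      _ = (M ^ (n + 2)).mulVec u x := by
          have h2 : (M ^ (n + 2)).mulVec u = M.mulVec ((M ^ (n + 1)).mulVec u) := by
            rw [Matrix.mulVec_mulVec, ← pow_succ']
          rw [h2]
          simp [Matrix.mulVec, dotProduct]

/-- The mixing set is closed under successor. -/
lemma mixing_step {M : Matrix Ω Ω ℝ} {pd : Ω → ℝ} (hM : IsStochastic M) {t : ℕ}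
    (h : ∀ ν : Ω → ℝ, IsProbDist ν →
      tvDist (fun y => ∑ x, ν x * (M ^ t) x y) pd ≤ 1 / 4) :
    ∀ ν : Ω → ℝ, IsProbDist ν →
      tvDist (fun y => ∑ x, ν x * (M ^ (t + 1)) x y) pd ≤ 1 / 4 := by
  intro ν hν
  set ν' : Ω → ℝ := fun z => ∑ x, ν x * M x z with hν'def
  have hν' : IsProbDist ν' := by
    constructor
    · intro z
      exact Finset.sum_nonneg fun x _ => mul_nonneg (hν.1 x) (hM.1 x z)
    · rw [hν'def]
      rw [Finset.sum_comm]
      calc ∑ x, ∑ z, ν x * M x z = ∑ x, ν x * ∑ z, M x z := by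
            simp [Finset.mul_sum]
        _ = 1 := by simp [hM.2, hν.2]
  have heq : (fun y => ∑ x, ν x * (M ^ (t + 1)) x y)
      = (fun y => ∑ z, ν' z * (M ^ t) z y) := by
    funext y
    have hms : M ^ (t + 1) = M * M ^ t := by rw [pow_succ']
    rw [hms]
    calc ∑ x, ν x * (M * M ^ t) x y
        = ∑ x, ∑ z, ν x * M x z * (M ^ t) z y := by
          simp [Matrix.mul_apply, Finset.mul_sum, mul_assoc]
      _ = ∑ z, (∑ x, ν x * M x z) * (M ^ t) z y := by
          rw [Finset.sum_comm]
          congr 1; ext z; rw [Finset.sum_mul]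
      _ = ∑ z, ν' z * (M ^ t) z y := rfl
  rw [heq]
  exact h ν' hν'

/-- Doeblin: the mixing set is nonempty. -/
lemma mixing_nonempty {M : Matrix Ω Ω ℝ} {pd : Ω → ℝ} (hM : IsStochastic M)
    (hpd : IsProbDist pd) (hst : ∀ y, ∑ x, pd x * M x y = pd y)
    (herg : IsErgodic M) (x0 : Ω) :
    ∃ t : ℕ, ∀ ν : Ω → ℝ, IsProbDist ν →
      tvDist (fun y => ∑ x, ν x * (M ^ t) x y) pd ≤ 1 / 4 := by
  obtain ⟨k, hk⟩ := herg
  set P : Matrix Ω Ω ℝ := M ^ k with hPdef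
  have hPs : IsStochastic P := isStochastic_pow hM k
  have hPst : ∀ y, ∑ x, pd x * P x y = pd y := stationary_pow hst k
  obtain ⟨p0, _, hp0⟩ := Finset.exists_min_image (Finset.univ : Finset (Ω × Ω))
    (fun p => P p.1 p.2) ⟨(x0, x0), Finset.mem_univ _⟩
  set ε : ℝ := P p0.1 p0.2 with hεdef
  have hε : ∀ x y, ε ≤ P x y := fun x y => hp0 (x, y) (Finset.mem_univ _)
  have hεpos : 0 < ε := hk p0.1 p0.2
  set N : ℝ := (Fintype.card Ω : ℝ) with hNdef
  have hNpos : 0 < N := by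
    rw [hNdef]
    exact_mod_cast Fintype.card_pos_iff.2 ⟨x0⟩
  set c : ℝ := 1 - N * ε with hcdef
  have hc0 : 0 ≤ c := by
    have h1 : N * ε ≤ ∑ y, P x0 y := by
      rw [hNdef, ← Finset.card_univ, ← nsmul_eq_mul, ← Finset.sum_const]
      exact Finset.sum_le_sum fun z _ => hε x0 z
    rw [hPs.2 x0] at h1
    rw [hcdef]; linarith
  have hc1 : c < 1 := by
    rw [hcdef]
    nlinarith
  obtain ⟨m, hm⟩ := exists_pow_lt_of_lt_one
    (show (0 : ℝ) < 1 / (2 * N) by positivity) hc1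
  refine ⟨k * m, ?_⟩
  intro ν hν
  have hpow : M ^ (k * m) = P ^ m := by rw [hPdef, ← pow_mul]
  have hPmst : ∀ y, ∑ x, pd x * (P ^ m) x y = pd y := stationary_pow hPst m
  have hent : ∀ x y, |(P ^ m) x y - pd y| ≤ c ^ m := by
    intro x y
    rw [abs_le]
    constructor
    · have : pd y - (P ^ m) x y ≤ c ^ m := by
        rw [← hPmst y]
        calc (∑ x', pd x' * (P ^ m) x' y) - (P ^ m) x y
            = ∑ x', pd x' * ((P ^ m) x' y - (P ^ m) x y) := by
              have h9 : ∑ x', pd x' * ((P ^ m) x' y - (P ^ m) x y)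
                  = (∑ x', pd x' * (P ^ m) x' y) - (∑ x', pd x') * (P ^ m) x y := by
                rw [Finset.sum_mul, ← Finset.sum_sub_distrib]
                congr 1; ext x'; ring
              rw [h9, hpd.2, one_mul]
          _ ≤ ∑ x', pd x' * c ^ m := Finset.sum_le_sum fun x' _ =>
              mul_le_mul_of_nonneg_left (diam_pow_le hPs hε m x' x y) (hpd.1 x')
          _ = c ^ m := by rw [← Finset.sum_mul, hpd.2, one_mul]
      linarith
    · rw [← hPmst y]
      calc (P ^ m) x y - ∑ x', pd x' * (P ^ m) x' y
          = ∑ x', pd x' * ((P ^ m) x y - (P ^ m) x' y) := by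
            have h9 : ∑ x', pd x' * ((P ^ m) x y - (P ^ m) x' y)
                = (∑ x', pd x') * (P ^ m) x y - ∑ x', pd x' * (P ^ m) x' y := by
              rw [Finset.sum_mul, ← Finset.sum_sub_distrib]
              congr 1; ext x'; ring
            rw [h9, hpd.2, one_mul]
        _ ≤ ∑ x', pd x' * c ^ m := Finset.sum_le_sum fun x' _ =>
            mul_le_mul_of_nonneg_left (diam_pow_le hPs hε m x x' y) (hpd.1 x')
        _ = c ^ m := by rw [← Finset.sum_mul, hpd.2, one_mul]
  rw [hpow]
  unfold tvDist
  have hbound : ∀ y, |(∑ x, ν x * (P ^ m) x y) - pd y| ≤ c ^ m := by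
    intro y
    have heq1 : (∑ x, ν x * (P ^ m) x y) - pd y
        = ∑ x, ν x * ((P ^ m) x y - pd y) := by
      have : ∑ x, ν x * ((P ^ m) x y - pd y)
          = (∑ x, ν x * (P ^ m) x y) - (∑ x, ν x) * pd y := by
        rw [Finset.sum_mul, ← Finset.sum_sub_distrib]
        congr 1; ext x; ring
      rw [this, hν.2, one_mul]
    rw [heq1]
    calc |∑ x, ν x * ((P ^ m) x y - pd y)|
        ≤ ∑ x, |ν x * ((P ^ m) x y - pd y)| := Finset.abs_sum_le_sum_abs _ _
      _ ≤ ∑ x, ν x * c ^ m := by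
          apply Finset.sum_le_sum
          intro x _
          rw [abs_mul, abs_of_nonneg (hν.1 x)]
          exact mul_le_mul_of_nonneg_left (hent x y) (hν.1 x)
      _ = c ^ m := by rw [← Finset.sum_mul, hν.2, one_mul]
  have hsum : ∑ y, |(∑ x, ν x * (P ^ m) x y) - pd y| ≤ N * c ^ m := by
    calc ∑ y, |(∑ x, ν x * (P ^ m) x y) - pd y| ≤ ∑ _y : Ω, c ^ m :=
          Finset.sum_le_sum fun y _ => hbound y
      _ = N * c ^ m := by
          rw [Finset.sum_const, Finset.card_univ, nsmul_eq_mul, hNdef]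
  have : N * c ^ m ≤ 1 / 2 := by
    have := mul_le_mul_of_nonneg_left (le_of_lt hm) (le_of_lt hNpos)
    calc N * c ^ m ≤ N * (1 / (2 * N)) := this
      _ = 1 / 2 := by field_simp
  linarith


end AuxLemmas


/-- If `M` is reversible and ergodic and the trace length `T = n + 1`
is at least the mixing time of `M`, then the second largest absolute eigenvalue of the
`T`-trace chain `M^{(T)}` is at most `4/5`. -/
theorem traceChain_secondEigenvalue_le
    {Ω : Type*} [Fintype Ω] [DecidableEq Ω]
    (M : Matrix Ω Ω ℝ) (pd : Ω → ℝ)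
    (hM : IsStochastic M) (hpd : IsStationaryDist M pd) (herg : IsErgodic M)
    (hrev : IsReversible M pd)
    (n : ℕ) (hT : mixingTime M pd ≤ n + 1) :
    secondEigenvalue (traceChain M n) ≤ 4 / 5 := by
  classical
  apply Real.sSup_le _ (by norm_num)
  rintro s ⟨μ, ⟨v, hv0, hveq⟩, hμ1, rfl⟩
  by_cases hμ0 : μ = 0
  · rw [hμ0]; norm_num
  -- extract a nonzero coordinate and hence an element of Ω
  have hvx : ∃ a, v a ≠ 0 := by
    by_contra h
    push_neg at h
    exact hv0 (funext h)
  obtain ⟨a0, ha0⟩ := hvx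
  -- the action of the trace chain only depends on the last coordinate
  set g : Ω → ℝ := fun x =>
    ∑ b : Fin (n + 1) → Ω,
      (M x (b 0) * ∏ i : Fin n, M (b i.castSucc) (b i.succ)) * v b with hgdef
  have hg : ∀ a : Fin (n + 1) → Ω,
      (traceChain M n).mulVec v a = g (a (Fin.last n)) := by
    intro a
    simp only [Matrix.mulVec, dotProduct, traceChain, hgdef]
  have hgv : ∀ a : Fin (n + 1) → Ω, g (a (Fin.last n)) = μ * v a := by
    intro a
    rw [← hg a, hveq]
    simp
  -- define the pulled-back eigenvector on Ω
  set u : Ω → ℝ := fun x => g x / μ with hudef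
  have hvu : ∀ a : Fin (n + 1) → Ω, v a = u (a (Fin.last n)) := by
    intro a
    rw [hudef]
    simp only
    rw [hgv a]
    field_simp
  have hu0 : u ≠ 0 := by
    intro h
    apply ha0
    rw [hvu a0, h]
    rfl
  -- u is an eigenvector of M^(n+1) with eigenvalue μ
  have heigu : (M ^ (n + 1)).mulVec u = μ • u := by
    funext x
    have h1 : (M ^ (n + 1)).mulVec u x
        = ∑ b : Fin (n + 1) → Ω,
          (M x (b 0) * ∏ i : Fin n, M (b i.castSucc) (b i.succ)) * u (b (Fin.last n)) :=
      (pathSum M u n x).symm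
    have h2 : ∑ b : Fin (n + 1) → Ω,
        (M x (b 0) * ∏ i : Fin n, M (b i.castSucc) (b i.succ)) * u (b (Fin.last n)) = g x := by
      rw [hgdef]
      apply Finset.sum_congr rfl
      intro b _
      rw [← hvu b]
    have h3 : g x = μ * u x := by
      have h4 := hgv (fun _ => x)
      have h5 := hvu (fun _ => x)
      rw [h5] at h4
      exact h4
    rw [h1, h2, h3]
    simp
  -- the mixing set
  set S : Set ℕ := {t : ℕ | ∀ ν : Ω → ℝ, IsProbDist ν →
    tvDist (fun y => ∑ x, ν x * (M ^ t) x y) pd ≤ 1 / 4} with hSdef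
  have hSne : ∃ t, t ∈ S :=
    mixing_nonempty hM hpd.1 hpd.2 herg (a0 0)
  have hbase : mixingTime M pd ∈ S := Nat.sInf_mem hSne
  have hmono : ∀ t, mixingTime M pd ≤ t → t ∈ S := by
    intro t ht
    induction t, ht using Nat.le_induction with
    | base => exact hbase
    | succ t _ iht => exact mixing_step hM iht
  have hmemT : (n + 1) ∈ S := hmono (n + 1) hT
  -- total variation bound for point masses
  have htv : ∀ x : Ω, ∑ y, |(M ^ (n + 1)) x y - pd y| ≤ 1 / 2 := by
    intro x
    set ν : Ω → ℝ := fun z => if z = x then (1 : ℝ) else 0 with hνdef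
    have hν : IsProbDist ν := by
      constructor
      · intro z
        by_cases h : z = x <;> simp [hνdef, h]
      · rw [hνdef]
        simp
    have := hmemT ν hν
    have heq : (fun y => ∑ z, ν z * (M ^ (n + 1)) z y)
        = fun y => (M ^ (n + 1)) x y := by
      funext y
      rw [hνdef]
      simp [Finset.sum_ite_eq']
    rw [heq] at this
    unfold tvDist at this
    linarith
  -- conclude via the eigenvalue bound
  have hfinal : |μ| ≤ 1 / 2 :=
    eigen_bound (M ^ (n + 1)) pd (stationary_pow hpd.2 (n + 1)) htv hu0 heigu hμ1
  linarith
end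

section
/- Let C be the lazy random walk on the cycle ℤ_n (transition probabilities C(x,x) = 1/2, C(x, x+1 mod n) = C(x, x−1 mod n) = 1/4), whose stationary distribution is uniform. For 1 ≤ i ≤ n/2 with 2i dividing n, let f_i : ℤ_n → {0,1} be defined by f_i(x) = 0 if and only if (x mod 2i) < i. Then E_π[f_i] = 1/2, Var_π[f_i] = 1/4, and there is a universal constant c > 0 such that for all trace lengths T, the trace variance satisfies v_T(f_i) ≤ c·i²/T. -/
open Finset
open scoped BigOperators Classical

/-- The lazy random walk on the cycle `ℤ_n`:
`C(x,x) = 1/2`, `C(x, x±1) = 1/4`. -/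
noncomputable def cycleChain (n : ℕ) : Matrix (ZMod n) (ZMod n) ℝ :=
  fun x y =>
    (if y = x then (1 : ℝ) / 2 else 0) + (if y = x + 1 then (1 : ℝ) / 4 else 0) +
      (if y = x - 1 then (1 : ℝ) / 4 else 0)

/-- The function `f_i : ℤ_n → {0,1}`, `f_i x = 0` iff `(x mod 2i) < i`. -/
noncomputable def cycleF (n i : ℕ) (x : ZMod n) : ℝ :=
  if x.val % (2 * i) < i then 0 else 1


section General
variable {Ω : Type*} [Fintype Ω] [DecidableEq Ω]

noncomputable def chainW (M : Matrix Ω Ω ℝ) : (N : ℕ) → (Fin (N + 1) → Ω → ℝ) → Ω → ℝ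
  | 0, w, u => w 0 u
  | (N + 1), w, u => w 0 u * ∑ v, M u v * chainW M N (fun j => w j.succ) v

lemma key_sum (M : Matrix Ω Ω ℝ) : ∀ (N : ℕ) (q : Ω → ℝ) (w : Fin (N + 1) → Ω → ℝ),
    ∑ x : Fin (N + 1) → Ω,
      (q (x 0) * ∏ i : Fin N, M (x i.castSucc) (x i.succ)) * ∏ j, w j (x j)
      = ∑ u, q u * chainW M N w u := by
  intro N
  induction N with
  | zero =>
    intro q w
    rw [← Equiv.sum_comp (Equiv.funUnique (Fin 1) Ω).symm]
    simp [chainW, Fin.prod_univ_one]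
  | succ N ih =>
    intro q w
    rw [← Equiv.sum_comp (Fin.consEquiv (fun _ : Fin (N + 2) => Ω))]
    rw [Fintype.sum_prod_type]
    have key : ∀ (u : Ω) (y : Fin (N + 1) → Ω),
        (q ((Fin.cons u y : Fin (N+2) → Ω) 0) *
          ∏ i : Fin (N + 1), M ((Fin.cons u y : Fin (N+2) → Ω) i.castSucc)
            ((Fin.cons u y : Fin (N+2) → Ω) i.succ)) *
          ∏ j, w j ((Fin.cons u y : Fin (N+2) → Ω) j)
        = q u * (w 0 u *
            ((M u (y 0) * ∏ i : Fin N, M (y i.castSucc) (y i.succ)) *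
              ∏ j : Fin (N + 1), w j.succ (y j))) := by
      intro u y
      rw [Fin.prod_univ_succ (fun i : Fin (N+1) =>
        M ((Fin.cons u y : Fin (N+2) → Ω) i.castSucc) ((Fin.cons u y : Fin (N+2) → Ω) i.succ))]
      rw [Fin.prod_univ_succ (fun j : Fin (N+2) => w j ((Fin.cons u y : Fin (N+2) → Ω) j))]
      have h1 : ∀ i : Fin N, ((Fin.cons u y : Fin (N+2) → Ω) (i.succ.castSucc)) = y i.castSucc := by
        intro i; rw [← Fin.succ_castSucc]; simp
      simp only [Fin.castSucc_zero, Fin.cons_zero, Fin.cons_succ, h1]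
      ring
    simp only [Fin.consEquiv_apply]
    simp only [key]
    refine Finset.sum_congr rfl fun u _ => ?_
    rw [← Finset.mul_sum, ← Finset.mul_sum,
      ih (fun v => M u v) (fun j => w j.succ)]
    simp [chainW]

lemma chain_ones (M : Matrix Ω Ω ℝ) (hrow : ∀ x, ∑ y, M x y = 1) :
    ∀ (N : ℕ) (u : Ω), chainW M N (fun _ _ => (1:ℝ)) u = 1 := by
  intro N
  induction N with
  | zero => intro u; simp [chainW]
  | succ N ih => intro u; simp [chainW, ih, hrow]

lemma step_collapse (M : Matrix Ω Ω ℝ) (d : ℕ) (h : Ω → ℝ) (u : Ω) :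
    ∑ v, M u v * ∑ z, (M ^ d) v z * h z = ∑ z, (M ^ (d + 1)) u z * h z := by
  rw [pow_succ' M d]
  have h2 : ∀ z, (M * M ^ d) u z * h z = ∑ v, M u v * ((M ^ d) v z * h z) := by
    intro z; rw [Matrix.mul_apply, Finset.sum_mul]
    exact Finset.sum_congr rfl fun v _ => mul_assoc _ _ _
  rw [Finset.sum_congr rfl fun z _ => h2 z, Finset.sum_comm]
  exact Finset.sum_congr rfl fun v _ => by rw [Finset.mul_sum]

lemma chain_single (M : Matrix Ω Ω ℝ) (hrow : ∀ x, ∑ y, M x y = 1) :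
    ∀ (N d : ℕ), d ≤ N → ∀ (h : Ω → ℝ) (u : Ω),
      chainW M N (fun j v => if (j : ℕ) = d then h v else 1) u
        = ∑ v, (M ^ d) u v * h v := by
  intro N
  induction N with
  | zero =>
    intro d hd h u
    interval_cases d
    simp [chainW, Matrix.one_apply]
  | succ N ih =>
    intro d hd h u
    cases d with
    | zero =>
      have hw : (fun (j : Fin (N+1)) (v : Ω) => if ((j.succ : Fin (N+2)) : ℕ) = 0 then h v else 1)
          = fun _ _ => (1:ℝ) := by
        funext j v; simp
      simp only [chainW, hw, chain_ones M hrow, Fin.val_zero, mul_one, hrow]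
      simp [Matrix.one_apply]
    | succ d =>
      have hw : (fun (j : Fin (N+1)) (v : Ω) => if ((j.succ : Fin (N+2)) : ℕ) = d + 1 then h v else 1)
          = fun (j : Fin (N+1)) (v : Ω) => if (j : ℕ) = d then h v else 1 := by
        funext j v; simp [Fin.val_succ]
      simp only [chainW, hw, Fin.val_zero]
      simp only [show ¬(0:ℕ) = d + 1 by omega, if_false, one_mul]
      simp only [fun v => ih d (by omega) h v]
      exact step_collapse M d h u

lemma chain_pair (M : Matrix Ω Ω ℝ) (hrow : ∀ x, ∑ y, M x y = 1) :
    ∀ (N d e : ℕ), d ≤ e → e ≤ N → ∀ (g h : Ω → ℝ) (u : Ω),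
      chainW M N (fun j v => (if (j : ℕ) = d then g v else 1) * (if (j : ℕ) = e then h v else 1)) u
        = ∑ v, (M ^ d) u v * (g v * ∑ z, (M ^ (e - d)) v z * h z) := by
  intro N
  induction N with
  | zero =>
    intro d e hde he g h u
    interval_cases e
    interval_cases d
    simp [chainW, Matrix.one_apply]
  | succ N ih =>
    intro d e hde he g h u
    cases d with
    | zero =>
      cases e with
      | zero =>
        have hw : (fun (j : Fin (N+1)) (v : Ω) =>
            (if ((j.succ : Fin (N+2)) : ℕ) = 0 then g v else 1) *
            (if ((j.succ : Fin (N+2)) : ℕ) = 0 then h v else 1)) = fun _ _ => (1:ℝ) := by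
          funext j v; simp
        simp only [chainW, hw, chain_ones M hrow, Fin.val_zero, mul_one, hrow]
        simp [Matrix.one_apply]
      | succ e =>
        have hw : (fun (j : Fin (N+1)) (v : Ω) =>
            (if ((j.succ : Fin (N+2)) : ℕ) = 0 then g v else 1) *
            (if ((j.succ : Fin (N+2)) : ℕ) = e + 1 then h v else 1))
            = fun (j : Fin (N+1)) (v : Ω) => if (j : ℕ) = e then h v else 1 := by
          funext j v; simp [Fin.val_succ]
        simp only [chainW, hw, Fin.val_zero]
        rw [if_pos trivial]
        simp only [show ¬(0:ℕ) = e + 1 by omega, if_false, mul_one]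
        simp only [fun v => chain_single M hrow N e (by omega) h v]
        rw [step_collapse M e h u]
        simp [Matrix.one_apply, Nat.sub_zero]
    | succ d =>
      cases e with
      | zero => omega
      | succ e =>
        have he' : e ≤ N := by omega
        have hde' : d ≤ e := by omega
        have hw : (fun (j : Fin (N+1)) (v : Ω) =>
            (if ((j.succ : Fin (N+2)) : ℕ) = d + 1 then g v else 1) *
            (if ((j.succ : Fin (N+2)) : ℕ) = e + 1 then h v else 1))
            = fun (j : Fin (N+1)) (v : Ω) =>
              (if (j : ℕ) = d then g v else 1) * (if (j : ℕ) = e then h v else 1) := by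
          funext j v; simp [Fin.val_succ]
        simp only [chainW, hw, Fin.val_zero]
        simp only [show ¬(0:ℕ) = d + 1 by omega, show ¬(0:ℕ) = e + 1 by omega, if_false,
          one_mul]
        simp only [fun v => ih d e hde' he' g h v]
        rw [show e + 1 - (d + 1) = e - d by omega]
        exact step_collapse M d _ u

lemma stationary_pow_s10 (M : Matrix Ω Ω ℝ) (p : Ω → ℝ) (hp : IsStationaryDist M p) :
    ∀ (d : ℕ) (v : Ω), ∑ u, p u * (M ^ d) u v = p v := by
  intro d
  induction d with
  | zero => intro v; simp [Matrix.one_apply]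
  | succ d ih =>
    intro v
    rw [pow_succ M d]
    have : ∀ u, p u * (M ^ d * M) u v = ∑ w, (p u * (M ^ d) u w) * M w v := by
      intro u; rw [Matrix.mul_apply, Finset.mul_sum]
      exact Finset.sum_congr rfl fun w _ => by ring
    simp only [this]
    rw [Finset.sum_comm]
    have : ∀ w, ∑ u, (p u * (M ^ d) u w) * M w v = p w * M w v := by
      intro w; rw [← Finset.sum_mul, ih w]
    simp only [this]
    exact hp.2 v

lemma traceProb_explicit (M : Matrix Ω Ω ℝ) (p : Ω → ℝ) (N : ℕ) (x : Fin (N + 1) → Ω) :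
    traceProb M p (N + 1) x = p (x 0) * ∏ i : Fin N, M (x i.castSucc) (x i.succ) := by
  unfold traceProb
  rw [dif_pos (Nat.succ_pos N)]
  congr 1
  rw [Fin.prod_univ_castSucc (fun i : Fin (N+1) =>
    if h : (i : ℕ) + 1 < N + 1 then M (x i) (x ⟨(i : ℕ) + 1, h⟩) else 1)]
  simp only [Fin.val_last, Fin.coe_castSucc]
  rw [dif_neg (by omega), mul_one]
  refine Finset.prod_congr rfl fun i _ => ?_
  rw [dif_pos (by omega : (i : ℕ) + 1 < N + 1)]
  congr 1

lemma traceExp_pair (M : Matrix Ω Ω ℝ) (p : Ω → ℝ) (hM : IsStochastic M)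
    (hp : IsStationaryDist M p) (N : ℕ) (g h : Ω → ℝ) (j k : Fin (N + 1))
    (hjk : (j : ℕ) ≤ (k : ℕ)) :
    traceExp M p (N + 1) (fun x => g (x j) * h (x k))
      = ∑ u, p u * (g u * ∑ v, (M ^ ((k : ℕ) - (j : ℕ))) u v * h v) := by
  unfold traceExp
  have hint : ∀ x : Fin (N + 1) → Ω, g (x j) * h (x k)
      = ∏ m : Fin (N + 1), ((if (m : ℕ) = (j : ℕ) then g (x m) else 1) *
          (if (m : ℕ) = (k : ℕ) then h (x m) else 1)) := by
    intro x
    rw [Finset.prod_mul_distrib]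
    have e1 : ∀ (j : Fin (N+1)) (g : Ω → ℝ),
        (∏ m : Fin (N+1), if (m : ℕ) = (j : ℕ) then g (x m) else 1) = g (x j) := by
      intro j g
      have : ∀ m : Fin (N + 1), (if (m : ℕ) = (j : ℕ) then g (x m) else 1)
          = (if m = j then g (x m) else 1) := by
        intro m
        by_cases hm : m = j
        · subst hm; simp
        · rw [if_neg hm, if_neg (fun hv => hm (Fin.ext hv))]
      rw [Finset.prod_congr rfl fun m _ => this m,
        Finset.prod_ite_eq' Finset.univ j (fun m => g (x m))]
      simp
    rw [e1 j g, e1 k h]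
  simp only [hint, fun x => traceProb_explicit M p N x]
  rw [key_sum M N p (fun m v => (if (m : ℕ) = (j : ℕ) then g v else 1) * (if (m : ℕ) = (k : ℕ) then h v else 1))]
  simp only [fun u => chain_pair M hM.2 N (j : ℕ) (k : ℕ) hjk (by omega : (k:ℕ) ≤ N) g h u]
  simp only [Finset.mul_sum]
  rw [Finset.sum_comm]
  refine Finset.sum_congr rfl fun v _ => ?_
  rw [Finset.sum_comm]
  refine Finset.sum_congr rfl fun z _ => ?_
  have : ∀ u, p u * ((M ^ (j:ℕ)) u v * (g v * ((M ^ ((k:ℕ) - (j:ℕ))) v z * h z)))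
      = (p u * (M ^ (j:ℕ)) u v) * (g v * ((M ^ ((k:ℕ) - (j:ℕ))) v z * h z)) := by
    intro u; ring
  rw [Finset.sum_congr rfl fun u _ => this u, ← Finset.sum_mul,
    stationary_pow_s10 M p hp (j:ℕ) v]

lemma autocov_expand (M : Matrix Ω Ω ℝ) (p : Ω → ℝ) (f : Ω → ℝ) (t : ℕ) :
    autocov M p f t
      = ∑ u, p u * ((f u - stMean p f) * ∑ v, (M ^ t) u v * (f v - stMean p f)) := by
  unfold autocov
  refine Finset.sum_congr rfl fun u _ => ?_
  rw [Finset.mul_sum, Finset.mul_sum]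
  exact Finset.sum_congr rfl fun v _ => by ring

lemma traceExp_dist (M : Matrix Ω Ω ℝ) (p : Ω → ℝ) (hM : IsStochastic M)
    (hp : IsStationaryDist M p) (f : Ω → ℝ) (N : ℕ) (j k : Fin (N + 1)) :
    traceExp M p (N + 1)
        (fun x => (f (x j) - stMean p f) * (f (x k) - stMean p f))
      = autocov M p f (Nat.dist (j : ℕ) (k : ℕ)) := by
  rcases le_total (j : ℕ) (k : ℕ) with hjk | hjk
  · have h1 := traceExp_pair M p hM hp N (fun u => f u - stMean p f)
      (fun u => f u - stMean p f) j k hjk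
    rw [autocov_expand, Nat.dist_eq_sub_of_le hjk]
    exact h1
  · have hcomm : (fun x : Fin (N+1) → Ω =>
        (f (x j) - stMean p f) * (f (x k) - stMean p f))
        = fun x => (f (x k) - stMean p f) * (f (x j) - stMean p f) :=
      funext fun x => mul_comm _ _
    have h1 := traceExp_pair M p hM hp N (fun u => f u - stMean p f)
      (fun u => f u - stMean p f) k j hjk
    rw [hcomm, autocov_expand, Nat.dist_comm, Nat.dist_eq_sub_of_le hjk]
    exact h1

lemma traceExp_const_mul (M : Matrix Ω Ω ℝ) (p : Ω → ℝ) (T : ℕ) (c : ℝ)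
    (F : (Fin T → Ω) → ℝ) :
    traceExp M p T (fun x => c * F x) = c * traceExp M p T F := by
  unfold traceExp
  rw [Finset.mul_sum]
  exact Finset.sum_congr rfl fun x _ => by ring

lemma traceExp_sum (M : Matrix Ω Ω ℝ) (p : Ω → ℝ) (T : ℕ) {ι : Type*} (s : Finset ι)
    (F : ι → (Fin T → Ω) → ℝ) :
    traceExp M p T (fun x => ∑ i ∈ s, F i x) = ∑ i ∈ s, traceExp M p T (F i) := by
  unfold traceExp
  simp only [Finset.mul_sum]
  exact Finset.sum_comm

lemma traceVar_eq_s10 (M : Matrix Ω Ω ℝ) (p : Ω → ℝ) (hM : IsStochastic M)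
    (hp : IsStationaryDist M p) (f : Ω → ℝ) (N : ℕ) :
    traceVar M p f (N + 1)
      = ((((N + 1 : ℕ) : ℝ)) ^ 2)⁻¹ *
          ∑ j : Fin (N + 1), ∑ k : Fin (N + 1), autocov M p f (Nat.dist (j:ℕ) (k:ℕ)) := by
  have hT : (((N + 1 : ℕ) : ℝ)) ≠ 0 := by positivity
  have hpt : ∀ x : Fin (N + 1) → Ω,
      ((∑ i, f (x i)) / (((N + 1 : ℕ)) : ℝ) - stMean p f) ^ 2
        = ((((N + 1 : ℕ) : ℝ)) ^ 2)⁻¹ * ∑ j : Fin (N + 1), ∑ k : Fin (N + 1),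
            ((f (x j) - stMean p f) * (f (x k) - stMean p f)) := by
    intro x
    have hsum : ∑ j : Fin (N+1), ∑ k : Fin (N+1),
        ((f (x j) - stMean p f) * (f (x k) - stMean p f))
        = (∑ i, (f (x i) - stMean p f)) ^ 2 := by
      rw [sq, Finset.sum_mul_sum]
    have hc : ∑ i, (f (x i) - stMean p f)
        = (∑ i, f (x i)) - (((N + 1 : ℕ)) : ℝ) * stMean p f := by
      rw [Finset.sum_sub_distrib, Finset.sum_const, Finset.card_univ, Fintype.card_fin]
      push_cast; ring
    rw [hsum, hc]
    field_simp
    try ring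
  unfold traceVar
  rw [show (fun x : Fin (N+1) → Ω => ((∑ i, f (x i)) / (((N + 1 : ℕ)) : ℝ) - stMean p f) ^ 2)
      = fun x => ((((N + 1 : ℕ) : ℝ)) ^ 2)⁻¹ * ∑ j : Fin (N + 1), ∑ k : Fin (N + 1),
          ((f (x j) - stMean p f) * (f (x k) - stMean p f)) from funext hpt]
  rw [traceExp_const_mul]
  congr 1
  rw [traceExp_sum]
  refine Finset.sum_congr rfl fun j _ => ?_
  rw [traceExp_sum]
  exact Finset.sum_congr rfl fun k _ => traceExp_dist M p hM hp f N j k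

lemma traceVar_le_gen (M : Matrix Ω Ω ℝ) (p : Ω → ℝ) (hM : IsStochastic M)
    (hp : IsStationaryDist M p) (f : Ω → ℝ) (B : ℝ)
    (hA0 : ∀ t, 0 ≤ autocov M p f t)
    (hAB : ∀ T', ∑ t ∈ Finset.range T', autocov M p f t ≤ B) (N : ℕ) :
    traceVar M p f (N + 1) ≤ 2 * B / ((N + 1 : ℕ) : ℝ) := by
  have hT : (0:ℝ) < ((N + 1 : ℕ) : ℝ) := by positivity
  rw [traceVar_eq_s10 M p hM hp f N]
  have hrowbd : ∀ j : Fin (N + 1),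
      ∑ k : Fin (N + 1), autocov M p f (Nat.dist (j:ℕ) (k:ℕ)) ≤ 2 * B := by
    intro j
    have hsplit : ∑ k : Fin (N + 1), autocov M p f (Nat.dist (j:ℕ) (k:ℕ))
        = ∑ k ∈ Finset.range (N + 1), autocov M p f (Nat.dist (j:ℕ) k) :=
      Fin.sum_univ_eq_sum_range (fun k => autocov M p f (Nat.dist (j:ℕ) k)) (N+1)
    rw [hsplit, Finset.range_eq_Ico,
      ← Finset.sum_Ico_consecutive _ (Nat.zero_le ((j:ℕ) + 1)) (by omega : (j:ℕ) + 1 ≤ N + 1)]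
    have h1 : ∑ k ∈ Finset.Ico 0 ((j:ℕ)+1), autocov M p f (Nat.dist (j:ℕ) k) ≤ B := by
      rw [← Finset.range_eq_Ico]
      have : ∀ k ∈ Finset.range ((j:ℕ)+1), autocov M p f (Nat.dist (j:ℕ) k)
          = autocov M p f ((j:ℕ) + 1 - 1 - k) := by
        intro k hk
        rw [Finset.mem_range] at hk
        rw [Nat.dist_comm, Nat.dist_eq_sub_of_le (by omega : k ≤ (j:ℕ))]
        congr 1 <;> omega
      rw [Finset.sum_congr rfl this, Finset.sum_range_reflect]
      exact hAB _
    have h2 : ∑ k ∈ Finset.Ico ((j:ℕ)+1) (N+1), autocov M p f (Nat.dist (j:ℕ) k) ≤ B := by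
      rw [Finset.sum_Ico_eq_sum_range]
      have : ∀ t ∈ Finset.range (N + 1 - ((j:ℕ)+1)),
          autocov M p f (Nat.dist (j:ℕ) ((j:ℕ) + 1 + t)) = autocov M p f (t + 1) := by
        intro t _
        rw [Nat.dist_eq_sub_of_le (by omega : (j:ℕ) ≤ (j:ℕ) + 1 + t)]
        congr 1 <;> omega
      rw [Finset.sum_congr rfl this]
      have hup : ∑ t ∈ Finset.range (N + 1 - ((j:ℕ)+1)), autocov M p f (t + 1)
          = (∑ t ∈ Finset.range (N + 1 - ((j:ℕ)+1) + 1), autocov M p f t) - autocov M p f 0 := by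
        rw [Finset.sum_range_succ' (fun t => autocov M p f t)]
        try ring
      rw [hup]
      have := hAB (N + 1 - ((j:ℕ)+1) + 1)
      have := hA0 0
      linarith
    linarith
  have htot : ∑ j : Fin (N + 1), ∑ k : Fin (N + 1), autocov M p f (Nat.dist (j:ℕ) (k:ℕ))
      ≤ ((N + 1 : ℕ) : ℝ) * (2 * B) := by
    calc ∑ j : Fin (N + 1), ∑ k : Fin (N + 1), autocov M p f (Nat.dist (j:ℕ) (k:ℕ))
        ≤ ∑ _j : Fin (N + 1), 2 * B := Finset.sum_le_sum fun j _ => hrowbd j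
      _ = ((N + 1 : ℕ) : ℝ) * (2 * B) := by
          rw [Finset.sum_const, Finset.card_univ, Fintype.card_fin, nsmul_eq_mul]
          try push_cast
          try ring
  calc ((((N + 1 : ℕ) : ℝ)) ^ 2)⁻¹ *
          ∑ j : Fin (N + 1), ∑ k : Fin (N + 1), autocov M p f (Nat.dist (j:ℕ) (k:ℕ))
      ≤ ((((N + 1 : ℕ) : ℝ)) ^ 2)⁻¹ * (((N + 1 : ℕ) : ℝ) * (2 * B)) := by
        apply mul_le_mul_of_nonneg_left htot (by positivity)
    _ = 2 * B / ((N + 1 : ℕ) : ℝ) := by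
        field_simp
        try ring

end General


section Cycle
open Matrix
variable (n : ℕ) [NeZero n]

lemma cycle_symm : (cycleChain n)ᵀ = cycleChain n := by
  ext x y
  show cycleChain n y x = cycleChain n x y
  unfold cycleChain
  have h1 : (x = y) ↔ (y = x) := eq_comm
  have h2 : (x = y + 1) ↔ (y = x - 1) := by constructor <;> rintro rfl <;> ring
  have h3 : (x = y - 1) ↔ (y = x + 1) := by constructor <;> rintro rfl <;> ring
  simp only [h1, h2, h3]
  ring

lemma cycle_row (x : ZMod n) : ∑ y, cycleChain n x y = 1 := by
  unfold cycleChain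
  rw [Finset.sum_add_distrib, Finset.sum_add_distrib,
    Finset.sum_ite_eq' Finset.univ x (fun _ => (1:ℝ)/2),
    Finset.sum_ite_eq' Finset.univ (x + 1) (fun _ => (1:ℝ)/4),
    Finset.sum_ite_eq' Finset.univ (x - 1) (fun _ => (1:ℝ)/4)]
  norm_num

lemma cycle_stoch : IsStochastic (cycleChain n) := by
  constructor
  · intro x y; unfold cycleChain; positivity
  · exact cycle_row n

lemma cycle_stat : IsStationaryDist (cycleChain n) (fun _ : ZMod n => (1 : ℝ) / n) := by
  have hn : (0:ℝ) < (n:ℝ) := by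
    have := Nat.pos_of_ne_zero (NeZero.ne n); positivity
  refine ⟨⟨fun x => by positivity, ?_⟩, ?_⟩
  · rw [Finset.sum_const, Finset.card_univ, ZMod.card, nsmul_eq_mul]
    field_simp
  · intro y
    have hcol : ∑ x, cycleChain n x y = 1 := by
      have : ∀ x, cycleChain n x y = cycleChain n y x := by
        intro x
        have e : cycleChain n x y = (cycleChain n)ᵀ y x := rfl
        rw [e, cycle_symm n]
      rw [Finset.sum_congr rfl fun x _ => this x]
      exact cycle_row n y
    rw [show ∑ x : ZMod n, (1:ℝ)/n * cycleChain n x y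
        = (1:ℝ)/n * ∑ x, cycleChain n x y from (Finset.mul_sum _ _ _).symm, hcol, mul_one]

lemma shift_sum (G : ZMod n → ℝ) (a : ZMod n) : ∑ x, G (x + a) = ∑ x, G x :=
  Fintype.sum_equiv (Equiv.addRight a) _ _ (fun x => rfl)

lemma cycle_mulVec (g : ZMod n → ℝ) (x : ZMod n) :
    (cycleChain n).mulVec g x
      = (1/2) * g x + (1/4) * g (x + 1) + (1/4) * g (x + (-1)) := by
  unfold Matrix.mulVec dotProduct cycleChain
  rw [Finset.sum_congr rfl fun y _ => add_mul _ _ (g y)]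
  rw [Finset.sum_congr rfl fun y _ => congrArg (· + (if y = x - 1 then (1:ℝ)/4 else 0) * g y)
    (add_mul _ _ (g y))]
  rw [Finset.sum_add_distrib, Finset.sum_add_distrib]
  simp only [ite_mul, zero_mul]
  rw [Finset.sum_ite_eq' Finset.univ x (fun y => (1:ℝ)/2 * g y),
    Finset.sum_ite_eq' Finset.univ (x+1) (fun y => (1:ℝ)/4 * g y),
    Finset.sum_ite_eq' Finset.univ (x-1) (fun y => (1:ℝ)/4 * g y)]
  simp [sub_eq_add_neg]

variable (g : ZMod n → ℝ)

lemma shift_mul (a b : ZMod n) :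
    ∑ x, g (x + a) * g (x + b) = ∑ x, g x * g (x + (b - a)) := by
  have : ∀ x : ZMod n, g (x + a) * g (x + b)
      = (fun y => g y * g (y + (b - a))) (x + a) := by
    intro x
    show _ = g (x + a) * g ((x + a) + (b - a))
    rw [show (x + a) + (b - a) = x + b by ring]
  rw [Finset.sum_congr rfl fun x _ => this x, shift_sum n (fun y => g y * g (y + (b - a))) a]

lemma sq_shift (a : ZMod n) : ∑ x, g (x + a) * g (x + a) = ∑ x, g x * g x := by
  rw [shift_mul n g a a]
  exact Finset.sum_congr rfl fun x _ => by rw [sub_self, add_zero]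

lemma mul_shift_neg : ∑ x, g x * g (x + (-1)) = ∑ x, g x * g (x + 1) := by
  have h := shift_mul n g 1 0
  have e1 : ∀ x : ZMod n, g (x + 1) * g (x + 0) = g (x + 0) * g ((x + 0) + 1) := by
    intro x; rw [add_zero]; ring
  rw [Finset.sum_congr rfl fun x _ => e1 x,
    shift_sum n (fun y => g y * g (y + 1)) 0] at h
  rw [show (0 : ZMod n) - 1 = -1 by ring] at h
  exact h.symm

lemma quad_ip : ∑ x, g x * (cycleChain n).mulVec g x
    = (1/2) * (∑ x, g x * g x) + (1/2) * (∑ x, g x * g (x + 1)) := by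
  rw [Finset.sum_congr rfl fun x _ => congrArg (g x * ·) (cycle_mulVec n g x)]
  have e : ∀ x : ZMod n, g x * ((1/2) * g x + (1/4) * g (x+1) + (1/4) * g (x + (-1)))
      = (1/2) * (g x * g x) + (1/4) * (g x * g (x+1)) + (1/4) * (g x * g (x + (-1))) :=
    fun x => by ring
  rw [Finset.sum_congr rfl fun x _ => e x, Finset.sum_add_distrib, Finset.sum_add_distrib,
    ← Finset.mul_sum, ← Finset.mul_sum, ← Finset.mul_sum, mul_shift_neg n g]
  ring

lemma quad_norm : ∑ x, ((cycleChain n).mulVec g x) * ((cycleChain n).mulVec g x)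
    = (3/8) * (∑ x, g x * g x) + (1/2) * (∑ x, g x * g (x + 1))
      + (1/8) * (∑ x, g x * g (x + 2)) := by
  have e0 : ∀ x : ZMod n, ((cycleChain n).mulVec g x) * ((cycleChain n).mulVec g x)
      = ((1/2) * g x + (1/4) * g (x+1) + (1/4) * g (x + (-1)))
        * ((1/2) * g x + (1/4) * g (x+1) + (1/4) * g (x + (-1))) := fun x => by
    rw [cycle_mulVec n g x]
  rw [Finset.sum_congr rfl fun x _ => e0 x]
  have e : ∀ x : ZMod n,
      ((1/2) * g x + (1/4) * g (x+1) + (1/4) * g (x + (-1)))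
        * ((1/2) * g x + (1/4) * g (x+1) + (1/4) * g (x + (-1)))
      = (1/4) * (g x * g x) + (1/16) * (g (x+1) * g (x+1))
        + (1/16) * (g (x + (-1)) * g (x + (-1)))
        + (1/4) * (g x * g (x+1)) + (1/4) * (g x * g (x + (-1)))
        + (1/8) * (g (x + (-1)) * g (x+1)) := fun x => by ring
  rw [Finset.sum_congr rfl fun x _ => e x]
  rw [Finset.sum_add_distrib, Finset.sum_add_distrib, Finset.sum_add_distrib,
    Finset.sum_add_distrib, Finset.sum_add_distrib,
    ← Finset.mul_sum, ← Finset.mul_sum, ← Finset.mul_sum, ← Finset.mul_sum,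
    ← Finset.mul_sum, ← Finset.mul_sum,
    sq_shift n g 1, sq_shift n g (-1), mul_shift_neg n g,
    shift_mul n g (-1) 1, show (1 : ZMod n) - (-1) = 2 by ring]
  ring

lemma quad_plus : ∑ x, (g x + g (x + 1)) * (g x + g (x + 1))
    = 2 * (∑ x, g x * g x) + 2 * (∑ x, g x * g (x + 1)) := by
  have e : ∀ x : ZMod n, (g x + g (x+1)) * (g x + g (x+1))
      = (g x * g x) + (g (x+1) * g (x+1)) + 2 * (g x * g (x+1)) := fun x => by ring
  rw [Finset.sum_congr rfl fun x _ => e x, Finset.sum_add_distrib, Finset.sum_add_distrib,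
    ← Finset.mul_sum, sq_shift n g 1]
  ring

lemma quad_minus : ∑ x, (g x - g (x + 1)) * (g x - g (x + 1))
    = 2 * (∑ x, g x * g x) - 2 * (∑ x, g x * g (x + 1)) := by
  have e : ∀ x : ZMod n, (g x - g (x+1)) * (g x - g (x+1))
      = (g x * g x) + (g (x+1) * g (x+1)) - 2 * (g x * g (x+1)) := fun x => by ring
  rw [Finset.sum_congr rfl fun x _ => e x, Finset.sum_sub_distrib, Finset.sum_add_distrib,
    ← Finset.mul_sum, sq_shift n g 1]
  ring

lemma quad_minus2 : ∑ x, (g x - g (x + 2)) * (g x - g (x + 2))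
    = 2 * (∑ x, g x * g x) - 2 * (∑ x, g x * g (x + 2)) := by
  have e : ∀ x : ZMod n, (g x - g (x+2)) * (g x - g (x+2))
      = (g x * g x) + (g (x+2) * g (x+2)) - 2 * (g x * g (x+2)) := fun x => by ring
  rw [Finset.sum_congr rfl fun x _ => e x, Finset.sum_sub_distrib, Finset.sum_add_distrib,
    ← Finset.mul_sum, sq_shift n g 2]
  ring

lemma ip_nonneg : 0 ≤ ∑ x, g x * (cycleChain n).mulVec g x := by
  have h1 := quad_plus n g
  have h2 : 0 ≤ ∑ x, (g x + g (x + 1)) * (g x + g (x + 1)) :=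
    Finset.sum_nonneg fun x _ => mul_self_nonneg _
  rw [quad_ip n g]
  linarith

lemma ip_le : ∑ x, g x * (cycleChain n).mulVec g x ≤ ∑ x, g x * g x := by
  have h1 := quad_minus n g
  have h2 : 0 ≤ ∑ x, (g x - g (x + 1)) * (g x - g (x + 1)) :=
    Finset.sum_nonneg fun x _ => mul_self_nonneg _
  rw [quad_ip n g]
  linarith

lemma norm_le_ip : ∑ x, ((cycleChain n).mulVec g x) * ((cycleChain n).mulVec g x)
    ≤ ∑ x, g x * (cycleChain n).mulVec g x := by
  have h1 := quad_minus2 n g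
  have h2 : 0 ≤ ∑ x, (g x - g (x + 2)) * (g x - g (x + 2)) :=
    Finset.sum_nonneg fun x _ => mul_self_nonneg _
  rw [quad_ip n g, quad_norm n g]
  linarith

lemma poincare (i : ℕ) (hanti : ∀ x : ZMod n, g (x + (i : ZMod n)) = -g x) :
    ∑ x, g x * g x ≤ ((i:ℝ)^2/4) * ∑ x, (g x - g (x+1)) * (g x - g (x+1)) := by
  have tele : ∀ x : ZMod n,
      ∑ j ∈ Finset.range i, (g (x + (j : ZMod n)) - g (x + (j : ZMod n) + 1)) = 2 * g x := by
    intro x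
    have h := Finset.sum_range_sub' (fun j : ℕ => g (x + (j : ZMod n))) i
    simp only [Nat.cast_add, Nat.cast_one, Nat.cast_zero, add_zero, ← add_assoc] at h
    rw [h, hanti x]
    ring
  have key : ∀ x : ZMod n, 4 * (g x * g x) ≤ (i:ℝ) *
      ∑ j ∈ Finset.range i, (g (x + (j : ZMod n)) - g (x + (j : ZMod n) + 1))
        * (g (x + (j : ZMod n)) - g (x + (j : ZMod n) + 1)) := by
    intro x
    have hcs := Finset.sum_mul_sq_le_sq_mul_sq (Finset.range i) (fun _ => (1:ℝ))
      (fun j => g (x + (j : ZMod n)) - g (x + (j : ZMod n) + 1))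
    rw [Finset.sum_congr rfl (fun j _ => one_mul _), tele x] at hcs
    simp only [one_pow, Finset.sum_const, Finset.card_range, nsmul_eq_mul, mul_one] at hcs
    calc 4 * (g x * g x) = (2 * g x)^2 := by ring
      _ ≤ (i:ℝ) * ∑ j ∈ Finset.range i,
          (g (x + (j : ZMod n)) - g (x + (j : ZMod n) + 1))^2 := hcs
      _ = (i:ℝ) * ∑ j ∈ Finset.range i, (g (x + (j : ZMod n)) - g (x + (j : ZMod n) + 1))
            * (g (x + (j : ZMod n)) - g (x + (j : ZMod n) + 1)) := by
          simp only [pow_two]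
  have hsum := Finset.sum_le_sum (fun x (_ : x ∈ (Finset.univ : Finset (ZMod n))) => key x)
  rw [← Finset.mul_sum, ← Finset.mul_sum, Finset.sum_comm] at hsum
  have hshift : ∀ j : ℕ, ∑ x : ZMod n,
      (g (x + (j : ZMod n)) - g (x + (j : ZMod n) + 1))
        * (g (x + (j : ZMod n)) - g (x + (j : ZMod n) + 1))
      = ∑ x, (g x - g (x+1)) * (g x - g (x+1)) :=
    fun j => shift_sum n (fun y => (g y - g (y + 1)) * (g y - g (y + 1))) (j : ZMod n)
  rw [Finset.sum_congr rfl fun j _ => hshift j, Finset.sum_const, Finset.card_range,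
    nsmul_eq_mul] at hsum
  have e : (i:ℝ) * ((i:ℝ) * ∑ x, (g x - g (x+1)) * (g x - g (x+1)))
      = (i:ℝ)^2 * ∑ x, (g x - g (x+1)) * (g x - g (x+1)) := by ring
  rw [e] at hsum
  linarith

lemma contraction (i : ℕ) (hanti : ∀ x : ZMod n, g (x + (i : ZMod n)) = -g x) :
    ∑ x, g x * g x ≤ (i:ℝ)^2 *
      ((∑ x, g x * g x) - ∑ x, g x * (cycleChain n).mulVec g x) := by
  calc ∑ x, g x * g x
      ≤ ((i:ℝ)^2/4) * ∑ x, (g x - g (x+1)) * (g x - g (x+1)) := poincare n g i hanti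
    _ = (i:ℝ)^2 * ((∑ x, g x * g x) - ∑ x, g x * (cycleChain n).mulVec g x) := by
        rw [quad_minus n g, quad_ip n g]; ring

end Cycle


section CycleF
open Matrix
variable (n : ℕ) [NeZero n] (i : ℕ)

lemma cycleF_flip (hi1 : 1 ≤ i) (hdvd : 2*i ∣ n) (x : ZMod n) :
    cycleF n i (x + (i : ZMod n)) = 1 - cycleF n i x := by
  have hn : 0 < n := Nat.pos_of_ne_zero (NeZero.ne n)
  have h2in : 2*i ≤ n := Nat.le_of_dvd hn hdvd
  have hvali : ((i : ZMod n)).val = i := by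
    rw [ZMod.val_natCast]; exact Nat.mod_eq_of_lt (by omega)
  have hadd : (x + (i:ZMod n)).val % (2*i) = (x.val % (2*i) + i) % (2*i) := by
    rw [ZMod.val_add, hvali, Nat.mod_mod_of_dvd _ hdvd,
      Nat.add_mod x.val i (2*i), Nat.mod_eq_of_lt (show i < 2*i by omega)]
  unfold cycleF
  rw [hadd]
  have hxlt : x.val % (2*i) < 2*i := Nat.mod_lt _ (by omega)
  rcases lt_or_ge (x.val % (2*i)) i with h | h
  · rw [Nat.mod_eq_of_lt (by omega), if_neg (by omega), if_pos h]
    norm_num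
  · have hm : (x.val % (2*i) + i) % (2*i) = x.val % (2*i) - i := by
      rw [Nat.mod_eq_sub_mod (by omega)]
      rw [show x.val % (2*i) + i - 2*i = x.val % (2*i) - i by omega]
      exact Nat.mod_eq_of_lt (by omega)
    rw [hm, if_pos (by omega), if_neg (by omega)]
    norm_num

lemma ft_anti (hi1 : 1 ≤ i) (hdvd : 2*i ∣ n) (x : ZMod n) :
    cycleF n i (x + (i:ZMod n)) - 1/2 = -(cycleF n i x - 1/2) := by
  rw [cycleF_flip n i hi1 hdvd x]; ring

lemma ft_sq (x : ZMod n) :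
    (cycleF n i x - 1/2) * (cycleF n i x - 1/2) = 1/4 := by
  unfold cycleF; split <;> norm_num

lemma ft_s0 : ∑ x : ZMod n, (cycleF n i x - 1/2) * (cycleF n i x - 1/2) = (n:ℝ)/4 := by
  rw [Finset.sum_congr rfl fun x _ => ft_sq n i x, Finset.sum_const, Finset.card_univ,
    ZMod.card, nsmul_eq_mul]
  ring

lemma ft_sum (hi1 : 1 ≤ i) (hdvd : 2*i ∣ n) :
    ∑ x : ZMod n, (cycleF n i x - 1/2) = 0 := by
  have h := shift_sum n (fun y => cycleF n i y - 1/2) (i : ZMod n)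
  rw [Finset.sum_congr rfl fun x _ => ft_anti n i hi1 hdvd x] at h
  rw [Finset.sum_neg_distrib] at h
  linarith

lemma cycle_stMean (hi1 : 1 ≤ i) (hdvd : 2*i ∣ n) :
    stMean (fun _ : ZMod n => (1:ℝ)/n) (cycleF n i) = 1/2 := by
  have hn : (0:ℝ) < n := by exact_mod_cast Nat.pos_of_ne_zero (NeZero.ne n)
  unfold stMean
  rw [← Finset.mul_sum]
  have hs : ∑ x : ZMod n, cycleF n i x = (n:ℝ)/2 := by
    have h := ft_sum n i hi1 hdvd
    rw [Finset.sum_sub_distrib, Finset.sum_const, Finset.card_univ, ZMod.card,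
      nsmul_eq_mul] at h
    linarith
  rw [hs]
  field_simp

lemma cycle_stVar (hi1 : 1 ≤ i) (hdvd : 2*i ∣ n) :
    stVar (fun _ : ZMod n => (1:ℝ)/n) (cycleF n i) = 1/4 := by
  have hn : (0:ℝ) < n := by exact_mod_cast Nat.pos_of_ne_zero (NeZero.ne n)
  unfold stVar
  rw [cycle_stMean n i hi1 hdvd]
  have e : ∀ x : ZMod n, (1:ℝ)/n * (cycleF n i x - 1/2)^2 = (1/n) * (1/4) := by
    intro x; rw [pow_two, ft_sq n i x]
  rw [Finset.sum_congr rfl fun x _ => e x, Finset.sum_const, Finset.card_univ,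
    ZMod.card, nsmul_eq_mul]
  field_simp

end CycleF

noncomputable def hvec (n i : ℕ) [NeZero n] (s : ℕ) : ZMod n → ℝ :=
  ((cycleChain n) ^ s).mulVec (fun x => cycleF n i x - 1/2)

section Spectral
open Matrix
variable (n : ℕ) [NeZero n] (i : ℕ)

lemma hvec_zero : hvec n i 0 = fun x => cycleF n i x - 1/2 := by
  unfold hvec; rw [pow_zero, Matrix.one_mulVec]

lemma hvec_succ (s : ℕ) : hvec n i (s+1) = (cycleChain n).mulVec (hvec n i s) := by
  unfold hvec
  rw [pow_succ' (cycleChain n) s]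
  exact (Matrix.mulVec_mulVec _ _ _).symm

lemma hvec_anti (hi1 : 1 ≤ i) (hdvd : 2*i ∣ n) :
    ∀ s (x : ZMod n), hvec n i s (x + (i:ZMod n)) = - hvec n i s x := by
  intro s
  induction s with
  | zero =>
    intro x
    rw [hvec_zero]
    exact ft_anti n i hi1 hdvd x
  | succ s ih =>
    intro x
    rw [hvec_succ, cycle_mulVec, cycle_mulVec,
      show x + (i:ZMod n) + 1 = (x+1) + (i:ZMod n) by ring,
      show x + (i:ZMod n) + (-1) = (x+(-1)) + (i:ZMod n) by ring,
      ih x, ih (x+1), ih (x+(-1))]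
    ring

lemma u_decay (hi1 : 1 ≤ i) (hdvd : 2*i ∣ n) (s : ℕ) :
    ∑ x, hvec n i s x * hvec n i s x
      ≤ (i:ℝ)^2 * ((∑ x, hvec n i s x * hvec n i s x)
          - ∑ x, hvec n i (s+1) x * hvec n i (s+1) x) := by
  have h1 := contraction n (hvec n i s) i (hvec_anti n i hi1 hdvd s)
  have h2 := norm_le_ip n (hvec n i s)
  rw [← hvec_succ n i s] at h2
  calc ∑ x, hvec n i s x * hvec n i s x
      ≤ (i:ℝ)^2 * ((∑ x, hvec n i s x * hvec n i s x)
          - ∑ x, hvec n i s x * (cycleChain n).mulVec (hvec n i s) x) := h1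
    _ ≤ (i:ℝ)^2 * ((∑ x, hvec n i s x * hvec n i s x)
          - ∑ x, hvec n i (s+1) x * hvec n i (s+1) x) := by
        apply mul_le_mul_of_nonneg_left _ (sq_nonneg _)
        have h3 : ∑ x, hvec n i s x * (cycleChain n).mulVec (hvec n i s) x
            ≥ ∑ x, hvec n i (s+1) x * hvec n i (s+1) x := by
          calc ∑ x, hvec n i (s+1) x * hvec n i (s+1) x
              = ∑ x, ((cycleChain n).mulVec (hvec n i s)) x
                  * ((cycleChain n).mulVec (hvec n i s)) x := by rw [hvec_succ n i s]
            _ ≤ _ := norm_le_ip n (hvec n i s)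
        linarith
  
lemma u_nonneg (s : ℕ) : 0 ≤ ∑ x, hvec n i s x * hvec n i s x :=
  Finset.sum_nonneg fun x _ => mul_self_nonneg _

lemma u_sumbound (hi1 : 1 ≤ i) (hdvd : 2*i ∣ n) (N : ℕ) :
    ∑ s ∈ Finset.range N, (∑ x, hvec n i s x * hvec n i s x)
      ≤ (i:ℝ)^2 * ((n:ℝ)/4) := by
  calc ∑ s ∈ Finset.range N, (∑ x, hvec n i s x * hvec n i s x)
      ≤ ∑ s ∈ Finset.range N, (i:ℝ)^2 * ((∑ x, hvec n i s x * hvec n i s x)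
          - ∑ x, hvec n i (s+1) x * hvec n i (s+1) x) :=
        Finset.sum_le_sum fun s _ => u_decay n i hi1 hdvd s
    _ = (i:ℝ)^2 * ∑ s ∈ Finset.range N, ((∑ x, hvec n i s x * hvec n i s x)
          - ∑ x, hvec n i (s+1) x * hvec n i (s+1) x) := by rw [Finset.mul_sum]
    _ = (i:ℝ)^2 * ((∑ x, hvec n i 0 x * hvec n i 0 x)
          - ∑ x, hvec n i N x * hvec n i N x) := by
        rw [Finset.sum_range_sub' (fun s => ∑ x, hvec n i s x * hvec n i s x) N]
    _ ≤ (i:ℝ)^2 * (∑ x, hvec n i 0 x * hvec n i 0 x) := by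
        apply mul_le_mul_of_nonneg_left _ (sq_nonneg _)
        have := u_nonneg n i N
        linarith
    _ = (i:ℝ)^2 * ((n:ℝ)/4) := by
        rw [hvec_zero n i, ft_s0 n i]

lemma symm_move (A : Matrix (ZMod n) (ZMod n) ℝ) (hA : Aᵀ = A) (v w : ZMod n → ℝ) :
    ∑ x, v x * (A.mulVec w) x = ∑ x, (A.mulVec v) x * w x := by
  have h1 : ∑ x, v x * (A.mulVec w) x = v ⬝ᵥ A.mulVec w := rfl
  rw [h1, Matrix.dotProduct_mulVec, ← Matrix.mulVec_transpose, hA]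
  rfl

lemma pow_symm (t : ℕ) : ((cycleChain n) ^ t)ᵀ = (cycleChain n) ^ t := by
  rw [Matrix.transpose_pow, cycle_symm]

lemma autocov_inner (hi1 : 1 ≤ i) (hdvd : 2*i ∣ n) (t : ℕ) :
    autocov (cycleChain n) (fun _ : ZMod n => (1:ℝ)/n) (cycleF n i) t
      = (1/(n:ℝ)) * ∑ x, (cycleF n i x - 1/2)
          * (((cycleChain n) ^ t).mulVec (fun y => cycleF n i y - 1/2)) x := by
  unfold autocov
  rw [cycle_stMean n i hi1 hdvd]
  rw [Finset.mul_sum]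
  refine Finset.sum_congr rfl fun x _ => ?_
  have e : (((cycleChain n) ^ t).mulVec (fun y => cycleF n i y - 1/2)) x
      = ∑ y, ((cycleChain n) ^ t) x y * (cycleF n i y - 1/2) := rfl
  rw [e, Finset.mul_sum, Finset.mul_sum]
  refine Finset.sum_congr rfl fun y _ => by ring

lemma aut_even (hi1 : 1 ≤ i) (hdvd : 2*i ∣ n) (s : ℕ) :
    autocov (cycleChain n) (fun _ : ZMod n => (1:ℝ)/n) (cycleF n i) (2*s)
      = (1/(n:ℝ)) * ∑ x, hvec n i s x * hvec n i s x := by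
  rw [autocov_inner n i hi1 hdvd]
  congr 1
  have e1 : ((cycleChain n) ^ (2*s)).mulVec (fun y => cycleF n i y - 1/2)
      = ((cycleChain n) ^ s).mulVec (hvec n i s) := by
    rw [show 2*s = s + s by ring, pow_add]
    exact (Matrix.mulVec_mulVec _ _ _).symm
  rw [e1, symm_move n _ (pow_symm n s) _ (hvec n i s)]
  rfl

lemma aut_odd (hi1 : 1 ≤ i) (hdvd : 2*i ∣ n) (s : ℕ) :
    autocov (cycleChain n) (fun _ : ZMod n => (1:ℝ)/n) (cycleF n i) (2*s+1)
      = (1/(n:ℝ)) * ∑ x, hvec n i s x * ((cycleChain n).mulVec (hvec n i s)) x := by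
  rw [autocov_inner n i hi1 hdvd]
  congr 1
  have e1 : ((cycleChain n) ^ (2*s+1)).mulVec (fun y => cycleF n i y - 1/2)
      = ((cycleChain n) ^ s).mulVec (hvec n i (s+1)) := by
    rw [show 2*s+1 = s + (s+1) by ring, pow_add]
    exact (Matrix.mulVec_mulVec _ _ _).symm
  rw [e1, symm_move n _ (pow_symm n s) _ (hvec n i (s+1)), hvec_succ n i s]
  rfl

lemma aut_nonneg (hi1 : 1 ≤ i) (hdvd : 2*i ∣ n) (t : ℕ) :
    0 ≤ autocov (cycleChain n) (fun _ : ZMod n => (1:ℝ)/n) (cycleF n i) t := by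
  have hn : (0:ℝ) < n := by exact_mod_cast Nat.pos_of_ne_zero (NeZero.ne n)
  rcases Nat.even_or_odd t with ⟨s, hs⟩ | ⟨s, hs⟩
  · rw [show t = 2*s by omega, aut_even n i hi1 hdvd s]
    exact mul_nonneg (by positivity) (u_nonneg n i s)
  · rw [show t = 2*s+1 by omega, aut_odd n i hi1 hdvd s]
    exact mul_nonneg (by positivity) (ip_nonneg n (hvec n i s))

lemma aut_sum (hi1 : 1 ≤ i) (hdvd : 2*i ∣ n) (T' : ℕ) :
    ∑ t ∈ Finset.range T',
        autocov (cycleChain n) (fun _ : ZMod n => (1:ℝ)/n) (cycleF n i) t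
      ≤ (i:ℝ)^2 / 2 := by
  have hn : (0:ℝ) < n := by exact_mod_cast Nat.pos_of_ne_zero (NeZero.ne n)
  have hstep : ∀ (F : ℕ → ℝ) (N : ℕ), ∑ t ∈ Finset.range (2*N), F t
      = ∑ s ∈ Finset.range N, (F (2*s) + F (2*s+1)) := by
    intro F N
    induction N with
    | zero => simp
    | succ N ih =>
      rw [show 2*(N+1) = (2*N+1)+1 by ring, Finset.sum_range_succ, Finset.sum_range_succ,
        ih, Finset.sum_range_succ]
      ring
  calc ∑ t ∈ Finset.range T',
        autocov (cycleChain n) (fun _ : ZMod n => (1:ℝ)/n) (cycleF n i) t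
      ≤ ∑ t ∈ Finset.range (2*T'),
        autocov (cycleChain n) (fun _ : ZMod n => (1:ℝ)/n) (cycleF n i) t := by
        apply Finset.sum_le_sum_of_subset_of_nonneg
          (Finset.range_subset_range.mpr (by omega))
          (fun t _ _ => aut_nonneg n i hi1 hdvd t)
    _ = ∑ s ∈ Finset.range T',
        (autocov (cycleChain n) (fun _ : ZMod n => (1:ℝ)/n) (cycleF n i) (2*s)
          + autocov (cycleChain n) (fun _ : ZMod n => (1:ℝ)/n) (cycleF n i) (2*s+1)) :=
        hstep (fun t => autocov (cycleChain n) (fun _ : ZMod n => (1:ℝ)/n) (cycleF n i) t) T'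
    _ ≤ ∑ s ∈ Finset.range T', (2/(n:ℝ)) * (∑ x, hvec n i s x * hvec n i s x) := by
        apply Finset.sum_le_sum
        intro s _
        rw [aut_even n i hi1 hdvd s, aut_odd n i hi1 hdvd s]
        have hip := ip_le n (hvec n i s)
        have h4 : (1/(n:ℝ)) * (∑ x, hvec n i s x * ((cycleChain n).mulVec (hvec n i s)) x)
            ≤ (1/(n:ℝ)) * (∑ x, hvec n i s x * hvec n i s x) :=
          mul_le_mul_of_nonneg_left hip (by positivity)
        have h5 : (2/(n:ℝ)) * (∑ x, hvec n i s x * hvec n i s x)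
            = (1/(n:ℝ)) * (∑ x, hvec n i s x * hvec n i s x)
              + (1/(n:ℝ)) * (∑ x, hvec n i s x * hvec n i s x) := by ring
        linarith
    _ = (2/(n:ℝ)) * ∑ s ∈ Finset.range T', (∑ x, hvec n i s x * hvec n i s x) := by
        rw [Finset.mul_sum]
    _ ≤ (2/(n:ℝ)) * ((i:ℝ)^2 * ((n:ℝ)/4)) :=
        mul_le_mul_of_nonneg_left (u_sumbound n i hi1 hdvd T') (by positivity)
    _ = (i:ℝ)^2 / 2 := by field_simp; ring

end Spectral

/-- On the lazy cycle walk with uniform stationary distribution,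
each `f_i` (for `1 ≤ i ≤ n/2` with `2i ∣ n`) has stationary mean `1/2` and stationary
variance `1/4`, and there is a universal constant `c > 0` such that the trace variance
satisfies `v_T(f_i) ≤ c · i² / T` for every trace length `T ≥ 1`. -/
theorem cycle_mean_var_and_traceVar_upper :
    (∀ (n : ℕ) [NeZero n] (i : ℕ), 1 ≤ i → i ≤ n / 2 → 2 * i ∣ n →
        stMean (fun _ : ZMod n => (1 : ℝ) / n) (cycleF n i) = 1 / 2 ∧
          stVar (fun _ : ZMod n => (1 : ℝ) / n) (cycleF n i) = 1 / 4) ∧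
      ∃ c : ℝ, 0 < c ∧
        ∀ (n : ℕ) [NeZero n] (i : ℕ), 1 ≤ i → i ≤ n / 2 → 2 * i ∣ n →
          ∀ T : ℕ, 1 ≤ T →
            traceVar (cycleChain n) (fun _ : ZMod n => (1 : ℝ) / n) (cycleF n i) T ≤
              c * (i : ℝ) ^ 2 / (T : ℝ) := by
  constructor
  · intro n _ i h1 h2 h3
    exact ⟨cycle_stMean n i h1 h3, cycle_stVar n i h1 h3⟩
  · refine ⟨1, one_pos, ?_⟩
    intro n _ i h1 h2 h3 T hT
    obtain ⟨N, rfl⟩ : ∃ N, T = N + 1 := ⟨T - 1, by omega⟩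
    have hb := traceVar_le_gen (cycleChain n) (fun _ : ZMod n => (1:ℝ)/n)
      (cycle_stoch n) (cycle_stat n) (cycleF n i) ((i:ℝ)^2/2)
      (aut_nonneg n i h1 h3) (aut_sum n i h1 h3) N
    calc traceVar (cycleChain n) (fun _ : ZMod n => (1 : ℝ) / n) (cycleF n i) (N+1)
        ≤ 2 * ((i:ℝ)^2/2) / ((N + 1 : ℕ) : ℝ) := hb
      _ = 1 * (i : ℝ) ^ 2 / ((N + 1 : ℕ) : ℝ) := by ring
end

section
/- Let G = (V,E) be a finite graph, k a number of colors, V_j ⊆ V a subset, B(V_j) = {(u,v) ∈ E : u ∈ V_j, v ∈ V \ V_j} its cut set, and G′ = (V, E \ B(V_j)). If γ is drawn uniformly at random from the proper k-colorings of G′, then the probability that some edge (u,v) ∈ B(V_j) has γ(u) = γ(v) is at most #B(V_j)/k. -/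
open Finset
open scoped BigOperators Classical

/-- Let `G = (V, E)` be a finite (undirected, i.e. symmetric) graph,
`k` a number of colors, `Vj ⊆ V`, `B = B(Vj) = {(u,v) ∈ E : u ∈ Vj, v ∉ Vj}` the cut
set, and `G' = (V, E \ B(Vj))` the graph with the cut edges removed (`E'` below keeps
exactly the edges whose endpoints lie on the same side of the cut). If `γ` is drawn
uniformly at random from the proper `k`-colorings of `G'`, then the probability that
some cut edge `(u,v) ∈ B` is monochromatic (`γ u = γ v`) is at most `#B / k`. -/
theorem cut_monochromatic_prob
    {V : Type*} [Fintype V] [DecidableEq V]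
    (E : Finset (V × V)) (hsym : ∀ u v : V, (u, v) ∈ E → (v, u) ∈ E)
    (k : ℕ) (Vj : Finset V)
    (B E' : Finset (V × V)) (Γ' : Finset (V → Fin k))
    (hB : B = E.filter fun e => e.1 ∈ Vj ∧ e.2 ∉ Vj)
    (hE' : E' = E.filter fun e => e.1 ∈ Vj ↔ e.2 ∈ Vj)
    (hΓ' : Γ' = Finset.univ.filter fun γ : V → Fin k => ∀ e ∈ E', γ e.1 ≠ γ e.2) :
    ((Γ'.filter fun γ => ∃ e ∈ B, γ e.1 = γ e.2).card : ℝ) / (Γ'.card : ℝ) ≤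
      (B.card : ℝ) / (k : ℝ) := by
  classical
  -- trivial case: no cut edges
  by_cases hBne : B = ∅
  · subst hBne
    simp only [Finset.notMem_empty, false_and, exists_false, exists_prop]
    rw [Finset.filter_false_of_mem (fun γ _ => by simp)]
    simp only [Finset.card_empty, Nat.cast_zero, zero_div]
    positivity
  -- trivial case: no proper colorings
  by_cases hΓ0 : Γ'.card = 0
  · rw [hΓ0]
    simp only [Nat.cast_zero, div_zero]
    positivity
  have hΓpos : 0 < Γ'.card := Nat.pos_of_ne_zero hΓ0
  obtain ⟨γ₀, hγ₀⟩ := Finset.card_pos.mp hΓpos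
  obtain ⟨e₀, he₀⟩ := Finset.nonempty_iff_ne_empty.mpr hBne
  have hk : 0 < k := (γ₀ e₀.1).pos
  haveI : NeZero k := ⟨hk.ne'⟩
  -- the color shift on the `Vj` side
  set S : Fin k → (V → Fin k) → (V → Fin k) :=
    fun c γ v => if v ∈ Vj then γ v + c else γ v with hS
  have hSmem : ∀ c γ, γ ∈ Γ' → S c γ ∈ Γ' := by
    intro c γ hγ
    rw [hΓ', Finset.mem_filter] at hγ ⊢
    refine ⟨Finset.mem_univ _, fun e he => ?_⟩
    have hiff : e.1 ∈ Vj ↔ e.2 ∈ Vj := by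
      have := he; rw [hE', Finset.mem_filter] at this; exact this.2
    have hne := hγ.2 e he
    simp only [hS]
    by_cases h1 : e.1 ∈ Vj
    · rw [if_pos h1, if_pos (hiff.mp h1)]
      exact fun h => hne (add_right_cancel h)
    · rw [if_neg h1, if_neg (fun h2 => h1 (hiff.mpr h2))]
      exact hne
  have hSS : ∀ c γ, S c (S (-c) γ) = γ := by
    intro c γ; funext x
    simp only [hS]
    by_cases hx : x ∈ Vj <;> simp [hx, neg_add_cancel_right]
  have hSS' : ∀ c γ, S (-c) (S c γ) = γ := by
    intro c γ; have := hSS (-c) γ; rwa [neg_neg] at this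
  -- key counting: for a cut edge, exactly a 1/k fraction is monochromatic
  have hkey : ∀ e ∈ B, (Γ'.filter fun γ => γ e.1 = γ e.2).card * k = Γ'.card := by
    intro e he
    rw [hB, Finset.mem_filter] at he
    obtain ⟨-, hu, hv⟩ := he
    have hcard : ((Γ'.filter fun γ => γ e.1 = γ e.2) ×ˢ (Finset.univ : Finset (Fin k))).card
        = Γ'.card := by
      refine Finset.card_bij' (fun p _ => S p.2 p.1)
        (fun δ _ => (S (-(δ e.1 - δ e.2)) δ, δ e.1 - δ e.2)) ?_ ?_ ?_ ?_
      · rintro ⟨γ, c⟩ hp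
        rw [Finset.mem_product, Finset.mem_filter] at hp
        exact hSmem c γ hp.1.1
      · intro δ hδ
        rw [Finset.mem_product, Finset.mem_filter]
        refine ⟨⟨hSmem _ δ hδ, ?_⟩, Finset.mem_univ _⟩
        simp only [hS, if_pos hu, if_neg hv]
        abel
      · rintro ⟨γ, c⟩ hp
        rw [Finset.mem_product, Finset.mem_filter] at hp
        have hmono : γ e.1 = γ e.2 := hp.1.2
        have hc : (S c γ) e.1 - (S c γ) e.2 = c := by
          simp only [hS, if_pos hu, if_neg hv, hmono]; abel
        rw [Prod.mk.injEq]
        constructor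
        · rw [hc]; exact hSS' c γ
        · exact hc
      · intro δ hδ
        exact hSS _ δ
    rw [Finset.card_product, Finset.card_univ, Fintype.card_fin] at hcard
    exact hcard
  -- union bound
  have hsub : (Γ'.filter fun γ => ∃ e ∈ B, γ e.1 = γ e.2)
      ⊆ B.biUnion fun e => Γ'.filter fun γ => γ e.1 = γ e.2 := by
    intro γ hγ
    rw [Finset.mem_filter] at hγ
    obtain ⟨e, he, hm⟩ := hγ.2
    exact Finset.mem_biUnion.mpr ⟨e, he, Finset.mem_filter.mpr ⟨hγ.1, hm⟩⟩
  have hmain : (Γ'.filter fun γ => ∃ e ∈ B, γ e.1 = γ e.2).card * k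
      ≤ B.card * Γ'.card := by
    calc (Γ'.filter fun γ => ∃ e ∈ B, γ e.1 = γ e.2).card * k
        ≤ (B.biUnion fun e => Γ'.filter fun γ => γ e.1 = γ e.2).card * k :=
          Nat.mul_le_mul_right _ (Finset.card_le_card hsub)
      _ ≤ (∑ e ∈ B, (Γ'.filter fun γ => γ e.1 = γ e.2).card) * k :=
          Nat.mul_le_mul_right _ Finset.card_biUnion_le
      _ = ∑ e ∈ B, (Γ'.filter fun γ => γ e.1 = γ e.2).card * k := by
          rw [Finset.sum_mul]
      _ = ∑ _e ∈ B, Γ'.card := Finset.sum_congr rfl hkey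
      _ = B.card * Γ'.card := by rw [Finset.sum_const, smul_eq_mul]
  rw [div_le_div_iff₀ (by exact_mod_cast hΓpos) (by exact_mod_cast hk)]
  exact_mod_cast hmain
end
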